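/- arXiv:0904.2514 — 3 statements merged into one kernel-verified Lean document; each statement's English description precedes it below -/
import Mathlib

section
/- For c > 0, c ≠ 1, and real x ≠ y, the limiting kernel admits the real form: (1/(h(0)·πi))·(log c/(c²−1))·[G(1+λ; 2πix)·G(λ; 2πiy) − G(1+λ; 2πiy)·G(λ; 2πix)]/(x−y) = (2/(π(x−y)·h(0)))·(log c/(c²−1))·Im( G(1+λ; 2πix)·G(λ; 2πiy) ). -/
open Filter Set

/-- `G(a;ζ) = e^{-ζ/2} ∑_{k≥0} ((a)_k/(k!)²) ζ^k`, where `(a)_k` is the Pochhammer symbol. -/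
noncomputable def Gfun (a ζ : ℂ) : ℂ :=
  Complex.exp (-ζ / 2) *
    ∑' k : ℕ, ((ascPochhammer ℂ k).eval a / ((Nat.factorial k : ℂ)) ^ 2) * ζ ^ k

/-- `λ = i·log(c)/π`. -/
noncomputable def lamC (c : ℝ) : ℂ := Complex.I * ((Real.log c / Real.pi : ℝ) : ℂ)

section Aux

open Finset

lemma natKey (m n : ℕ) :
    ∑ k ∈ Finset.range (n + 1), m.descFactorial k * ((n.choose k) ^ 2 * (n - k).factorial)
      = n.factorial * (m + n).choose n := by
  have h1 : ∀ k ∈ Finset.range (n + 1),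
      m.descFactorial k * ((n.choose k) ^ 2 * (n - k).factorial)
        = n.factorial * (m.choose k * n.choose (n - k)) := by
    intro k hk
    have hk' : k ≤ n := by simpa using Nat.lt_succ_iff.mp (Finset.mem_range.mp hk)
    rw [Nat.descFactorial_eq_factorial_mul_choose, Nat.choose_symm hk',
      ← Nat.choose_mul_factorial_mul_factorial hk']
    ring
  rw [Finset.sum_congr rfl h1, ← Finset.mul_sum]
  congr 1
  rw [Nat.add_choose_eq m n n, Finset.Nat.sum_antidiagonal_eq_sum_range_succ
    (fun i j => m.choose i * n.choose j) n]

lemma keyC (n : ℕ) (a : ℂ) :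
    ∑ k ∈ Finset.range (n + 1),
        ((-1 : ℂ) ^ k * ((n.choose k : ℂ)) ^ 2 * ((n - k).factorial : ℂ))
          * (ascPochhammer ℂ k).eval a
      = (ascPochhammer ℂ n).eval (1 - a) := by
  have hpoly : (∑ k ∈ Finset.range (n + 1),
      Polynomial.C ((-1 : ℂ) ^ k * ((n.choose k : ℂ)) ^ 2 * ((n - k).factorial : ℂ))
        * ascPochhammer ℂ k)
      = (ascPochhammer ℂ n).comp (1 - Polynomial.X) := by
    apply Polynomial.eq_of_infinite_eval_eq
    apply Set.infinite_of_injective_forall_mem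
      (f := fun m : ℕ => -(m : ℂ))
    · intro i j hij
      simpa using hij
    · intro m
      simp only [Set.mem_setOf_eq, Polynomial.eval_finset_sum, Polynomial.eval_mul,
        Polynomial.eval_C, Polynomial.eval_comp, Polynomial.eval_sub, Polynomial.eval_one,
        Polynomial.eval_X]
      have hL : ∀ k ∈ Finset.range (n + 1),
          (-1 : ℂ) ^ k * ((n.choose k : ℂ)) ^ 2 * ((n - k).factorial : ℂ)
            * (ascPochhammer ℂ k).eval (-(m : ℂ))
          = ((m.descFactorial k * ((n.choose k) ^ 2 * (n - k).factorial) : ℕ) : ℂ) := by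
        intro k _
        rw [ascPochhammer_eval_neg_eq_descPochhammer, descPochhammer_eval_eq_descFactorial]
        push_cast
        ring_nf
        have h2 : ((-1 : ℂ)) ^ (k * 2) = 1 := by rw [mul_comm k 2, pow_mul]; norm_num
        rw [h2, mul_one]
      rw [Finset.sum_congr rfl hL, ← Nat.cast_sum, natKey m n]
      have : (1 : ℂ) - (-(m : ℂ)) = ((m + 1 : ℕ) : ℂ) := by push_cast; ring
      rw [this, ← ascPochhammer_eval_cast, ascPochhammer_nat_eq_ascFactorial,
        Nat.ascFactorial_eq_factorial_mul_choose]
  have := congrArg (Polynomial.eval a) hpoly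
  simpa [Polynomial.eval_finset_sum] using this

/-- The terms of the series defining `Gfun`. -/
noncomputable def Gser (a ζ : ℂ) : ℕ → ℂ :=
  fun k => ((ascPochhammer ℂ k).eval a / ((Nat.factorial k : ℂ)) ^ 2) * ζ ^ k

lemma Gser_summable_norm (a ζ : ℂ) : Summable (fun k => ‖Gser a ζ k‖) := by
  apply summable_of_ratio_norm_eventually_le (r := 1/2) (by norm_num)
  rw [Filter.eventually_atTop]
  refine ⟨⌈(‖a‖ + 1) * ‖ζ‖ * 2⌉₊, fun k hk => ?_⟩
  have hfac : ((Nat.factorial k : ℂ)) ≠ 0 := by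
    exact_mod_cast Nat.factorial_ne_zero k
  have hk1 : ((k : ℂ) + 1) ≠ 0 := by
    have : ((k : ℂ) + 1) = (((k + 1 : ℕ)) : ℂ) := by push_cast; ring
    rw [this]
    exact_mod_cast Nat.succ_ne_zero k
  have hstep : Gser a ζ (k + 1) = Gser a ζ k * ((a + k) * ζ / ((k : ℂ) + 1) ^ 2) := by
    simp only [Gser, ascPochhammer_succ_eval, Nat.factorial_succ]
    push_cast
    field_simp
    ring
  have hkR : ((⌈(‖a‖ + 1) * ‖ζ‖ * 2⌉₊ : ℝ)) ≤ k := by exact_mod_cast hk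
  have hceil : (‖a‖ + 1) * ‖ζ‖ * 2 ≤ (⌈(‖a‖ + 1) * ‖ζ‖ * 2⌉₊ : ℝ) := Nat.le_ceil _
  have hbound : ‖(a + k) * ζ / ((k : ℂ) + 1) ^ 2‖ ≤ 1/2 := by
    rw [norm_div, norm_mul, norm_pow]
    have h1 : ‖(k : ℂ) + 1‖ = (k : ℝ) + 1 := by
      have : ((k : ℂ) + 1) = (((k + 1 : ℕ)) : ℂ) := by push_cast; ring
      rw [this, Complex.norm_natCast]; push_cast; ring
    rw [h1]
    have h2 : ‖a + (k : ℂ)‖ ≤ ‖a‖ + k := by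
      calc ‖a + (k : ℂ)‖ ≤ ‖a‖ + ‖(k : ℂ)‖ := norm_add_le _ _
      _ = ‖a‖ + k := by rw [Complex.norm_natCast]
    rw [div_le_iff₀ (by positivity)]
    have hz : (0:ℝ) ≤ ‖ζ‖ := norm_nonneg _
    have ha : (0:ℝ) ≤ ‖a‖ := norm_nonneg _
    have hk0 : (0:ℝ) ≤ k := Nat.cast_nonneg k
    nlinarith [mul_le_mul_of_nonneg_right h2 hz,
      mul_le_mul_of_nonneg_right (hceil.trans hkR) (show (0:ℝ) ≤ (k:ℝ) + 1 by positivity),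
      mul_nonneg (mul_nonneg ha hz) hk0, mul_nonneg hz hk0]
  calc ‖‖Gser a ζ (k+1)‖‖ = ‖Gser a ζ k‖ * ‖(a + k) * ζ / ((k : ℂ) + 1) ^ 2‖ := by
        rw [norm_norm, hstep, norm_mul]
    _ ≤ ‖Gser a ζ k‖ * (1/2) := by
        exact mul_le_mul_of_nonneg_left hbound (norm_nonneg _)
    _ = 1/2 * ‖‖Gser a ζ k‖‖ := by rw [norm_norm]; ring

lemma exp_series (ζ : ℂ) : Complex.exp ζ = ∑' k : ℕ, ζ ^ k / (Nat.factorial k : ℂ) := by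
  rw [Complex.exp_eq_exp_ℂ, NormedSpace.exp_eq_tsum_div]

lemma exp_summable_norm (ζ : ℂ) : Summable fun k : ℕ => ‖ζ ^ k / (Nat.factorial k : ℂ)‖ := by
  refine (Real.summable_pow_div_factorial ‖ζ‖).congr fun k => ?_
  rw [norm_div, norm_pow, Complex.norm_natCast]

lemma cauchy_coeff (a ζ : ℂ) (n : ℕ) :
    ∑ kl ∈ Finset.HasAntidiagonal.antidiagonal n, ((-ζ) ^ kl.1 / (Nat.factorial kl.1 : ℂ)) * Gser a ζ kl.2
      = Gser (1 - a) (-ζ) n := by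
  rw [Finset.Nat.sum_antidiagonal_eq_sum_range_succ
    (fun i j => ((-ζ) ^ i / (Nat.factorial i : ℂ)) * Gser a ζ j) n]
  rw [← Finset.sum_range_reflect]
  simp only [Nat.succ_sub_one]
  have hterm : ∀ k ∈ Finset.range (n + 1),
      (-ζ) ^ (n - k) / (Nat.factorial (n - k) : ℂ) * Gser a ζ (n - (n - k))
        = (((-1 : ℂ) ^ k * ((n.choose k : ℂ)) ^ 2 * ((n - k).factorial : ℂ))
            * (ascPochhammer ℂ k).eval a) * ((-ζ) ^ n / ((Nat.factorial n : ℂ)) ^ 2) := by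
    intro k hk
    have hk' : k ≤ n := Nat.lt_succ_iff.mp (Finset.mem_range.mp hk)
    have hnn : n - (n - k) = k := Nat.sub_sub_self hk'
    have hfac : ((Nat.factorial n : ℂ)) =
        (n.choose k : ℂ) * (Nat.factorial k : ℂ) * (Nat.factorial (n - k) : ℂ) := by
      exact_mod_cast (Nat.choose_mul_factorial_mul_factorial hk').symm
    have hC : ((n.choose k : ℂ)) ≠ 0 := Nat.cast_ne_zero.mpr (Nat.choose_pos hk').ne'
    have hf1 : ((Nat.factorial k : ℂ)) ≠ 0 := Nat.cast_ne_zero.mpr (Nat.factorial_ne_zero k)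
    have hf2 : ((Nat.factorial (n - k) : ℂ)) ≠ 0 :=
      Nat.cast_ne_zero.mpr (Nat.factorial_ne_zero (n - k))
    have hz : ζ ^ k = (-1 : ℂ) ^ k * (-ζ) ^ k := by
      rw [← mul_pow]; norm_num
    have hpow : (-ζ) ^ n = (-ζ) ^ (n - k) * (-ζ) ^ k := by
      rw [← pow_add, Nat.sub_add_cancel hk']
    rw [hnn, hpow, hfac]
    simp only [Gser, hz]
    field_simp
  rw [Finset.sum_congr rfl hterm, ← Finset.sum_mul, keyC]
  simp only [Gser]
  ring

lemma Gser_tsum_mul (a ζ : ℂ) :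
    Complex.exp (-ζ) * ∑' k, Gser a ζ k = ∑' k, Gser (1 - a) (-ζ) k := by
  rw [exp_series]
  rw [tsum_mul_tsum_eq_tsum_sum_antidiagonal_of_summable_norm
    (exp_summable_norm (-ζ)) (Gser_summable_norm a ζ)]
  exact tsum_congr (cauchy_coeff a ζ)

lemma Gfun_eq (a ζ : ℂ) : Gfun a ζ = Complex.exp (-ζ / 2) * ∑' k, Gser a ζ k := rfl

/-- Kummer's transformation for `Gfun`. -/
lemma Gfun_kummer (a ζ : ℂ) : Gfun a ζ = Gfun (1 - a) (-ζ) := by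
  rw [Gfun_eq, Gfun_eq, ← Gser_tsum_mul a ζ]
  rw [show (-(-ζ) / 2 : ℂ) = ζ / 2 by ring, ← mul_assoc, ← Complex.exp_add,
    show (ζ / 2 + -ζ : ℂ) = -ζ / 2 by ring]

lemma ascPochhammer_eval_conj (k : ℕ) (a : ℂ) :
    (starRingEnd ℂ) ((ascPochhammer ℂ k).eval a)
      = (ascPochhammer ℂ k).eval ((starRingEnd ℂ) a) := by
  induction k with
  | zero => simp
  | succ n ih => simp [ascPochhammer_succ_eval, ih]

lemma Gfun_conj (a ζ : ℂ) :
    (starRingEnd ℂ) (Gfun a ζ) = Gfun ((starRingEnd ℂ) a) ((starRingEnd ℂ) ζ) := by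
  rw [Gfun_eq, Gfun_eq, map_mul, ← Complex.exp_conj]
  congr 1
  · congr 1
    rw [map_div₀, map_neg, map_ofNat]
  · have h1 : (starRingEnd ℂ) (∑' k, Gser a ζ k)
        = ∑' k, (starRingEnd ℂ) (Gser a ζ k) :=
      calc (starRingEnd ℂ) (∑' k, Gser a ζ k) = star (∑' k, Gser a ζ k) := rfl
        _ = ∑' k, star (Gser a ζ k) := tsum_star
        _ = ∑' k, (starRingEnd ℂ) (Gser a ζ k) := rfl
    rw [h1]
    refine tsum_congr fun k => ?_
    simp only [Gser, map_mul, map_div₀, map_pow, map_natCast, ascPochhammer_eval_conj]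

lemma final_algebra (H Pi L C u X : ℂ) (hH : H ≠ 0) (hPi : Pi ≠ 0) (hC : C ≠ 0) (hX : X ≠ 0) :
    1 / (H * Pi * Complex.I) * (L / C) * (2 * u * Complex.I / X)
      = 2 / (Pi * X * H) * (L / C) * u := by
  rw [one_div, mul_inv, Complex.inv_I]
  have h2 : (2 : ℂ) * u * Complex.I / X = Complex.I * (2 * u / X) := by ring
  rw [h2]
  have h3 : (H * Pi)⁻¹ * -Complex.I * (L / C) * (Complex.I * (2 * u / X))
      = (-(Complex.I * Complex.I)) * ((H * Pi)⁻¹ * (L / C) * (2 * u / X)) := by ring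
  rw [h3, Complex.I_mul_I, neg_neg, one_mul]
  field_simp

lemma lamC_conj (c : ℝ) : (starRingEnd ℂ) (lamC c) = -lamC c := by
  simp [lamC, map_mul, Complex.conj_I, Complex.conj_ofReal]

end Aux

theorem stmt9 (c : ℝ) (hc : 0 < c) (hc1 : c ≠ 1) (h0 : ℝ) (hh0 : 0 < h0) :
    ∀ x y : ℝ, x ≠ y →
      (1 / ((h0 : ℂ) * (Real.pi : ℂ) * Complex.I)) * (((Real.log c : ℝ) : ℂ) / ((c : ℂ) ^ 2 - 1)) *
        ((Gfun (1 + lamC c) (2 * (Real.pi : ℂ) * Complex.I * (x : ℂ)) *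
            Gfun (lamC c) (2 * (Real.pi : ℂ) * Complex.I * (y : ℂ)) -
          Gfun (1 + lamC c) (2 * (Real.pi : ℂ) * Complex.I * (y : ℂ)) *
            Gfun (lamC c) (2 * (Real.pi : ℂ) * Complex.I * (x : ℂ))) / ((x : ℂ) - (y : ℂ))) =
      Complex.ofReal (2 / (Real.pi * (x - y) * h0) * (Real.log c / (c ^ 2 - 1)) *
        (Gfun (1 + lamC c) (2 * (Real.pi : ℂ) * Complex.I * (x : ℂ)) *
          Gfun (lamC c) (2 * (Real.pi : ℂ) * Complex.I * (y : ℂ))).im) := by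
  intro x y hxy
  have hconjz : ∀ t : ℝ, (starRingEnd ℂ) (2 * (Real.pi : ℂ) * Complex.I * (t : ℂ))
      = -(2 * (Real.pi : ℂ) * Complex.I * (t : ℂ)) := by
    intro t
    rw [map_mul, map_mul, map_mul, Complex.conj_I, Complex.conj_ofReal, Complex.conj_ofReal,
      map_ofNat]
    ring
  have h1 : (starRingEnd ℂ) (Gfun (1 + lamC c) (2 * (Real.pi : ℂ) * Complex.I * (x : ℂ)))
      = Gfun (lamC c) (2 * (Real.pi : ℂ) * Complex.I * (x : ℂ)) := by
    rw [Gfun_conj, map_add, map_one, lamC_conj, hconjz,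
      Gfun_kummer (1 + -lamC c) (-(2 * (Real.pi : ℂ) * Complex.I * (x : ℂ)))]
    norm_num
  have h2 : (starRingEnd ℂ) (Gfun (lamC c) (2 * (Real.pi : ℂ) * Complex.I * (y : ℂ)))
      = Gfun (1 + lamC c) (2 * (Real.pi : ℂ) * Complex.I * (y : ℂ)) := by
    rw [Gfun_conj, lamC_conj, hconjz,
      Gfun_kummer (-lamC c) (-(2 * (Real.pi : ℂ) * Complex.I * (y : ℂ)))]
    norm_num
  set P := Gfun (1 + lamC c) (2 * (Real.pi : ℂ) * Complex.I * (x : ℂ)) *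
      Gfun (lamC c) (2 * (Real.pi : ℂ) * Complex.I * (y : ℂ)) with hP
  have hconjP : Gfun (1 + lamC c) (2 * (Real.pi : ℂ) * Complex.I * (y : ℂ)) *
      Gfun (lamC c) (2 * (Real.pi : ℂ) * Complex.I * (x : ℂ))
      = (starRingEnd ℂ) (Gfun (1 + lamC c) (2 * (Real.pi : ℂ) * Complex.I * (x : ℂ)) *
          Gfun (lamC c) (2 * (Real.pi : ℂ) * Complex.I * (y : ℂ))) := by
    rw [map_mul, h1, h2, mul_comm]
  rw [← hP] at hconjP
  rw [hconjP, Complex.sub_conj]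
  have hπ : ((Real.pi : ℝ) : ℂ) ≠ 0 := Complex.ofReal_ne_zero.mpr Real.pi_ne_zero
  have hh : ((h0 : ℝ) : ℂ) ≠ 0 := Complex.ofReal_ne_zero.mpr hh0.ne'
  have hxyC : ((x : ℂ) - (y : ℂ)) ≠ 0 := by
    rw [sub_ne_zero]
    exact_mod_cast hxy
  have hc2R : c ^ 2 - 1 ≠ 0 := by
    intro h
    have h' : (c - 1) * (c + 1) = 0 := by nlinarith
    rcases mul_eq_zero.mp h' with h'' | h''
    · exact hc1 (by linarith)
    · linarith
  have hc2 : ((c : ℂ)) ^ 2 - 1 ≠ 0 := by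
    have : ((c : ℂ)) ^ 2 - 1 = (((c ^ 2 - 1 : ℝ)) : ℂ) := by push_cast; ring
    rw [this]
    exact Complex.ofReal_ne_zero.mpr hc2R
  generalize P.im = u
  push_cast
  exact final_algebra _ _ _ _ _ _ hh hπ hc2 hxyC
end

section
/- Let a ∈ ℝ∖{0}. Then for every x ∈ ℝ, ₁F₁(ia; 1; ix) ≠ 0 and ₁F₁(1+ia; 1; ix) ≠ 0. Moreover, all zeros of z ↦ ₁F₁(ia; 1; iz) lie in the lower half plane ℂ⁻ = {Im z < 0}, all zeros of z ↦ ₁F₁(1+ia; 1; iz) lie in the upper half plane ℂ⁺ = {Im z > 0}, and |₁F₁(1+ia; 1; iz)| ≤ |₁F₁(ia; 1; iz)| for all z with Im z ≥ 0, with equality if and only if z ∈ ℝ. -/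
open Filter Set Complex

namespace OFO

/-- generic entire power series sum -/
noncomputable def Esum (e : ℕ → ℂ) (z : ℂ) : ℂ := ∑' k : ℕ, e k * z ^ k

/-- shifted (derivative) coefficients -/
noncomputable def de (e : ℕ → ℂ) : ℕ → ℂ := fun k => ((k : ℂ) + 1) * e (k + 1)

def Hyp (e : ℕ → ℂ) (M : ℝ) : Prop := ∀ k : ℕ, ((k : ℝ) + 1) * ‖e (k + 1)‖ ≤ M * ‖e k‖

theorem hyp_nonneg_aux {e : ℕ → ℂ} {M : ℝ} (hM : 0 ≤ M) (he : Hyp e M) :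
    ∀ k, ‖e k‖ ≤ ‖e 0‖ * M ^ k / k.factorial := by
  intro k
  induction k with
  | zero => simp
  | succ n ih =>
    have h := he n
    have hn1 : (0:ℝ) < (n:ℝ) + 1 := by positivity
    have : ‖e (n+1)‖ ≤ M * ‖e n‖ / ((n:ℝ) + 1) := by
      rw [le_div_iff₀ hn1]; linarith [h]
    calc ‖e (n+1)‖ ≤ M * ‖e n‖ / ((n:ℝ)+1) := this
      _ ≤ M * (‖e 0‖ * M ^ n / n.factorial) / ((n:ℝ)+1) := by
          gcongr
      _ = ‖e 0‖ * M ^ (n+1) / (n+1).factorial := by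
          rw [Nat.factorial_succ]; push_cast; field_simp; ring

theorem nmul_pow_le {x : ℝ} (hx : 0 ≤ x) (n : ℕ) : (n:ℝ) * x ^ (n-1) ≤ (1+x)^n := by
  induction n with
  | zero => simp
  | succ n ih =>
    have h1 : x ^ n ≤ (1+x)^n := pow_le_pow_left₀ hx (by linarith) n
    have h2 : x * ((n:ℝ) * x ^ (n-1)) ≤ x * (1+x)^n := by
      apply mul_le_mul_of_nonneg_left ih hx
    have h3 : (n:ℝ) * x ^ n ≤ x * (1+x)^n := by
      rcases Nat.eq_zero_or_pos n with h | h
      · subst h; simpa using hx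
      · have : x * ((n:ℝ) * x ^ (n-1)) = (n:ℝ) * x ^ n := by
          rw [← mul_assoc, mul_comm x (n:ℝ), mul_assoc, ← pow_succ']
          congr 2
          omega
        linarith [h2, this.symm.le]
    calc ((n+1:ℕ):ℝ) * x ^ ((n+1)-1) = (n:ℝ) * x ^ n + x ^ n := by push_cast; ring
      _ ≤ x * (1+x)^n + (1+x)^n := by linarith
      _ = (1+x)^(n+1) := by ring

end OFO

namespace OFO
open Complex

theorem summable_norm_Esum {e : ℕ → ℂ} {M : ℝ} (hM : 0 ≤ M) (he : Hyp e M) {r : ℝ}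
    (hr : 0 ≤ r) : Summable (fun k => ‖e k‖ * r ^ k) := by
  have hsum : Summable (fun k : ℕ => ‖e 0‖ * (M*r)^k / k.factorial) := by
    have := (Real.summable_pow_div_factorial (M * r)).mul_left ‖e 0‖
    apply this.congr; intro k; rw [mul_div_assoc]
  refine Summable.of_nonneg_of_le (fun k => by positivity) (fun k => ?_) hsum
  calc ‖e k‖ * r ^ k ≤ (‖e 0‖ * M ^ k / k.factorial) * r ^ k := by
        have := hyp_nonneg_aux hM he k
        gcongr
    _ = ‖e 0‖ * (M*r) ^ k / k.factorial := by rw [mul_pow]; ring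

theorem summable_Esum {e : ℕ → ℂ} {M : ℝ} (hM : 0 ≤ M) (he : Hyp e M) (z : ℂ) :
    Summable (fun k => e k * z ^ k) := by
  apply Summable.of_norm
  have := summable_norm_Esum hM he (norm_nonneg z)
  apply this.congr
  intro k
  rw [norm_mul, norm_pow]

theorem hyp_de {e : ℕ → ℂ} {M : ℝ} (he : Hyp e M) : Hyp (de e) M := by
  intro k
  simp only [de]
  have e1 : (((k+1:ℕ)):ℂ)+1 = (((k+2:ℕ)):ℂ) := by push_cast; ring
  have e0 : ((k:ℂ)+1) = (((k+1:ℕ)):ℂ) := by push_cast; ring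
  rw [norm_mul, norm_mul, e1, e0, Complex.norm_natCast, Complex.norm_natCast]
  have h := he (k+1)
  push_cast at h ⊢
  nlinarith [mul_le_mul_of_nonneg_left h (show (0:ℝ) ≤ (k:ℝ)+1 by positivity),
    norm_nonneg (e (k+1+1)), norm_nonneg (e (k+1))]

theorem hasDerivAt_Esum {e : ℕ → ℂ} {M : ℝ} (hM : 0 ≤ M) (he : Hyp e M) (z : ℂ) :
    HasDerivAt (Esum e) (Esum (de e) z) z := by
  set R : ℝ := ‖z‖ + 1 with hR
  have hR0 : (0:ℝ) < R := by positivity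
  have key : HasDerivAt (fun w => ∑' k : ℕ, e k * w ^ k)
      (∑' k : ℕ, e k * ((k : ℂ) * z ^ (k-1))) z := by
    apply hasDerivAt_tsum_of_isPreconnected
      (u := fun k => ‖e 0‖ * M * (1 + M * R) ^ k / k.factorial)
      (g := fun (k : ℕ) (w : ℂ) => e k * w ^ k)
      (g' := fun (k : ℕ) (w : ℂ) => e k * ((k : ℂ) * w ^ (k-1)))
      (t := Metric.ball (0:ℂ) R)
      (y₀ := (0:ℂ))
    · have := (Real.summable_pow_div_factorial (1 + M * R)).mul_left (‖e 0‖ * M)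
      apply this.congr; intro k; rw [mul_div_assoc]
    · exact Metric.isOpen_ball
    · exact (convex_ball (0:ℂ) R).isPreconnected
    · intro k y _
      simpa using ((hasDerivAt_pow k y).const_mul (e k))
    · intro k y hy
      have hyR : ‖y‖ ≤ R := by
        have := mem_ball_zero_iff.mp hy
        linarith [this.le]
      have h1 : ‖e k * ((k:ℂ) * y ^ (k-1))‖ = (k:ℝ) * ‖e k‖ * ‖y‖^(k-1) := by
        rw [norm_mul, norm_mul, norm_pow, Complex.norm_natCast]; ring
      rw [h1]
      have hek : ‖e k‖ ≤ ‖e 0‖ * M ^ k / k.factorial := hyp_nonneg_aux hM he k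
      have h2 : (k:ℝ) * ‖e k‖ * ‖y‖^(k-1) ≤ (k:ℝ) * (‖e 0‖ * M ^ k / k.factorial) * R^(k-1) := by
        have := pow_le_pow_left₀ (norm_nonneg y) hyR (k-1)
        gcongr
      refine h2.trans ?_
      rcases Nat.eq_zero_or_pos k with rfl | hk
      · simp; positivity
      · have hMR : (k:ℝ) * (M*R) ^ (k-1) ≤ (1 + M*R)^k := nmul_pow_le (by positivity) k
        have hMk : M ^ k = M * M^(k-1) := by
          conv_lhs => rw [← Nat.succ_pred_eq_of_pos hk]
          rw [pow_succ', Nat.sub_one]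
        rw [hMk]
        have he1 : (k:ℝ) * (‖e 0‖ * (M * M^(k-1)) / k.factorial) * R^(k-1)
            = (‖e 0‖ * M / k.factorial) * ((k:ℝ) * (M*R)^(k-1)) := by
          rw [mul_pow]; field_simp
        rw [he1]
        have he2 : ‖e 0‖ * M * (1 + M*R)^k / k.factorial
            = (‖e 0‖ * M / k.factorial) * (1+M*R)^k := by field_simp
        rw [he2]
        gcongr
    · exact Metric.mem_ball_self hR0
    · apply summable_of_ne_finset_zero (s := ({0} : Finset ℕ))
      intro k hk
      simp only [Finset.mem_singleton] at hk
      simp [zero_pow hk]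
    · show z ∈ Metric.ball (0:ℂ) R
      exact mem_ball_zero_iff.mpr (by simp [hR])
  have hcv : (∑' k : ℕ, e k * ((k : ℂ) * z ^ (k-1))) = Esum (de e) z := by
    rw [Esum]
    have h2 := summable_norm_Esum hM (hyp_de he) (norm_nonneg z)
    have h3 : Summable (fun k : ℕ => e (k+1) * (((k+1:ℕ):ℂ) * z ^ k)) := by
      apply Summable.of_norm
      apply h2.congr
      intro k
      rw [norm_mul, norm_mul, norm_pow, Complex.norm_natCast]
      simp only [de, norm_mul]
      have : ‖(k:ℂ)+1‖ = ((k+1:ℕ):ℝ) := by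
        rw [show ((k:ℂ)+1) = (((k+1:ℕ)):ℂ) by push_cast; ring, Complex.norm_natCast]
      rw [this]
      ring
    have h4 : Summable (fun k : ℕ => e k * ((k : ℂ) * z ^ (k-1))) := by
      apply (summable_nat_add_iff 1).mp
      apply h3.congr
      intro k
      simp [Nat.add_sub_cancel]
    rw [Summable.tsum_eq_zero_add h4]
    simp only [Nat.cast_zero, zero_mul, mul_zero, zero_add]
    apply tsum_congr
    intro k
    simp only [de, Nat.add_sub_cancel]
    push_cast
    ring
  rw [hcv] at key
  exact key

theorem continuous_Esum {e : ℕ → ℂ} {M : ℝ} (hM : 0 ≤ M) (he : Hyp e M) :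
    Continuous (Esum e) := by
  rw [continuous_iff_continuousAt]
  exact fun z => (hasDerivAt_Esum hM he z).continuousAt

theorem Esum_zero (e : ℕ → ℂ) : Esum e 0 = e 0 := by
  rw [Esum]
  rw [tsum_eq_single 0]
  · simp
  · intro k hk
    simp [zero_pow hk]

end OFO

namespace OFO

variable (a : ℝ)

noncomputable def cc (k : ℕ) : ℂ :=
  (ascPochhammer ℂ k).eval (Complex.I * a) * Complex.I ^ k / ((k.factorial : ℂ))^2

noncomputable def dd (k : ℕ) : ℂ :=
  (ascPochhammer ℂ k).eval (1 + Complex.I * a) * Complex.I ^ k / ((k.factorial : ℂ))^2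

theorem cc_zero : cc a 0 = 1 := by simp [cc]

theorem dd_zero : dd a 0 = 1 := by simp [dd]

theorem cc_one : cc a 1 = -a := by
  simp [cc, ascPochhammer_one]
  ring_nf
  simp [Complex.I_sq]

theorem dd_one : dd a 1 = Complex.I - a := by
  simp [dd, ascPochhammer_one]
  ring_nf
  simp [Complex.I_sq]
  ring

theorem fact_ne (k : ℕ) : ((k.factorial : ℂ)) ≠ 0 :=
  Nat.cast_ne_zero.mpr k.factorial_ne_zero

theorem hcc_succ (k : ℕ) :
    cc a (k+1) * ((k:ℂ)+1)^2 = cc a k * (Complex.I * a + k) * Complex.I := by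
  have hfs : (((k+1).factorial : ℂ)) = ((k:ℂ)+1) * (k.factorial : ℂ) := by
    rw [Nat.factorial_succ]; push_cast; ring
  have hp := ascPochhammer_succ_eval (S := ℂ) k (Complex.I * a)
  have h1 : ((k:ℂ)+1) ≠ 0 := Nat.cast_add_one_ne_zero k
  have h2 : ((k.factorial : ℂ)) ≠ 0 := fact_ne k
  rw [cc, cc, hfs, hp, mul_pow, pow_succ]
  field_simp

theorem hdd_succ (k : ℕ) :
    dd a (k+1) * ((k:ℂ)+1)^2 = dd a k * (1 + Complex.I * a + k) * Complex.I := by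
  have hfs : (((k+1).factorial : ℂ)) = ((k:ℂ)+1) * (k.factorial : ℂ) := by
    rw [Nat.factorial_succ]; push_cast; ring
  have hp := ascPochhammer_succ_eval (S := ℂ) k (1 + Complex.I * a)
  have h1 : ((k:ℂ)+1) ≠ 0 := Nat.cast_add_one_ne_zero k
  have h2 : ((k.factorial : ℂ)) ≠ 0 := fact_ne k
  rw [dd, dd, hfs, hp, mul_pow, pow_succ]
  field_simp

theorem hcd (k : ℕ) :
    dd a k * (Complex.I * a) = cc a k * (Complex.I * a + k) := by
  have h1 : (Complex.I * a) * (ascPochhammer ℂ k).eval (1 + Complex.I * a)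
      = (ascPochhammer ℂ k).eval (Complex.I * a) * (Complex.I * a + k) := by
    have hl := ascPochhammer_succ_left (S := ℂ) k
    have hr := ascPochhammer_succ_eval (S := ℂ) k (Complex.I * a)
    have : (ascPochhammer ℂ (k+1)).eval (Complex.I * a)
        = (Complex.I * a) * (ascPochhammer ℂ k).eval (1 + Complex.I * a) := by
      rw [hl]
      simp [Polynomial.eval_mul, Polynomial.eval_comp, add_comm]
    rw [← this, hr]
  rw [cc, dd]
  linear_combination (Complex.I ^ k / ((k.factorial : ℂ))^2) * h1
end OFO

namespace OFO
open Complex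

theorem R1 (k : ℕ) (ha : a ≠ 0) :
    Complex.I * (k:ℂ) * cc a k = (a:ℂ) * (cc a k - dd a k) := by
  have hIa : (Complex.I * (a:ℂ)) ≠ 0 := mul_ne_zero Complex.I_ne_zero (ofReal_ne_zero.mpr ha)
  apply mul_left_cancel₀ hIa
  linear_combination (a:ℂ) * hcd a k + (a:ℂ)*(k:ℂ)*cc a k * Complex.I_mul_I

theorem R2 (k : ℕ) (ha : a ≠ 0) :
    Complex.I * ((k:ℂ)+1) * dd a (k+1) + (a:ℂ) * dd a (k+1)
      - (a:ℂ) * cc a (k+1) + dd a k = 0 := by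
  have hIa : (Complex.I * (a:ℂ)) ≠ 0 := mul_ne_zero Complex.I_ne_zero (ofReal_ne_zero.mpr ha)
  have h1 : dd a (k+1) * (Complex.I*(a:ℂ)) = cc a (k+1) * (Complex.I*(a:ℂ) + ((k:ℂ)+1)) := by
    have := hcd a (k+1); push_cast at this; exact this
  have h2 := hcc_succ a k
  have h3 := hcd a k
  apply mul_left_cancel₀ hIa
  linear_combination (Complex.I*((k:ℂ)+1) + (a:ℂ)) * h1 + Complex.I * h2 + h3
    + (cc a k*(Complex.I*(a:ℂ)+(k:ℂ)) + (a:ℂ)*((k:ℂ)+1)*cc a (k+1)) * Complex.I_mul_I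

theorem hyp_cc : Hyp (cc a) (|a| + 2) := by
  intro k
  have h := congrArg norm (hcc_succ a k)
  have hk1 : ‖((k:ℂ)+1)‖ = (k:ℝ)+1 := by
    rw [show ((k:ℂ)+1) = (((k+1:ℕ)):ℂ) by push_cast; ring, Complex.norm_natCast]
    push_cast; ring
  rw [norm_mul, norm_mul, norm_mul, norm_pow, hk1, Complex.norm_I, mul_one] at h
  have hb : ‖Complex.I*(a:ℂ) + (k:ℂ)‖ ≤ |a| + k := by
    refine (norm_add_le _ _).trans ?_
    rw [norm_mul, Complex.norm_I, one_mul, Complex.norm_real, Complex.norm_natCast,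
      Real.norm_eq_abs]
  have hpos : (0:ℝ) < (k:ℝ)+1 := by positivity
  rw [← mul_le_mul_iff_right₀ hpos]
  calc ((k:ℝ)+1)*(((k:ℝ)+1)*‖cc a (k+1)‖) = ‖cc a (k+1)‖*((k:ℝ)+1)^2 := by ring
    _ = ‖cc a k‖ * ‖Complex.I*(a:ℂ) + (k:ℂ)‖ := h
    _ ≤ ‖cc a k‖ * (|a| + k) := mul_le_mul_of_nonneg_left hb (norm_nonneg _)
    _ ≤ ((k:ℝ)+1)*((|a|+2)*‖cc a k‖) := by
        nlinarith [mul_nonneg (norm_nonneg (cc a k))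
          (show (0:ℝ) ≤ (k:ℝ)*|a| + (k:ℝ) + 2 by positivity)]

theorem hyp_dd : Hyp (dd a) (|a| + 2) := by
  intro k
  have h := congrArg norm (hdd_succ a k)
  have hk1 : ‖((k:ℂ)+1)‖ = (k:ℝ)+1 := by
    rw [show ((k:ℂ)+1) = (((k+1:ℕ)):ℂ) by push_cast; ring, Complex.norm_natCast]
    push_cast; ring
  rw [norm_mul, norm_mul, norm_mul, norm_pow, hk1, Complex.norm_I, mul_one] at h
  have hb : ‖1 + Complex.I*(a:ℂ) + (k:ℂ)‖ ≤ 1 + |a| + k := by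
    refine (norm_add_le _ _).trans ?_
    have : ‖(1:ℂ) + Complex.I*(a:ℂ)‖ ≤ 1 + |a| := by
      refine (norm_add_le _ _).trans ?_
      rw [norm_one, norm_mul, Complex.norm_I, one_mul, Complex.norm_real, Real.norm_eq_abs]
    rw [Complex.norm_natCast]
    linarith
  have hpos : (0:ℝ) < (k:ℝ)+1 := by positivity
  rw [← mul_le_mul_iff_right₀ hpos]
  calc ((k:ℝ)+1)*(((k:ℝ)+1)*‖dd a (k+1)‖) = ‖dd a (k+1)‖*((k:ℝ)+1)^2 := by ring
    _ = ‖dd a k‖ * ‖1 + Complex.I*(a:ℂ) + (k:ℂ)‖ := h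
    _ ≤ ‖dd a k‖ * (1 + |a| + k) := mul_le_mul_of_nonneg_left hb (norm_nonneg _)
    _ ≤ ((k:ℝ)+1)*((|a|+2)*‖dd a k‖) := by
        nlinarith [mul_nonneg (norm_nonneg (dd a k))
          (show (0:ℝ) ≤ (k:ℝ)*|a| + (k:ℝ) + 1 by positivity)]

end OFO

namespace OFO
open Complex

variable (a : ℝ)

noncomputable def ff (z : ℂ) : ℂ := Esum (cc a) z
noncomputable def gg (z : ℂ) : ℂ := Esum (dd a) z
noncomputable def Dc (z : ℂ) : ℂ := Esum (de (cc a)) z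
noncomputable def Dd (z : ℂ) : ℂ := Esum (de (dd a)) z

theorem Mnn : (0:ℝ) ≤ |a| + 2 := by positivity

theorem hasDerivAt_ff (z : ℂ) : HasDerivAt (ff a) (Dc a z) z :=
  hasDerivAt_Esum (Mnn a) (hyp_cc (a := a)) z

theorem hasDerivAt_gg (z : ℂ) : HasDerivAt (gg a) (Dd a z) z :=
  hasDerivAt_Esum (Mnn a) (hyp_dd (a := a)) z

theorem continuous_ff : Continuous (ff a) := continuous_Esum (Mnn a) (hyp_cc (a := a))
theorem continuous_gg : Continuous (gg a) := continuous_Esum (Mnn a) (hyp_dd (a := a))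

theorem ff_zero : ff a 0 = 1 := by rw [ff, Esum_zero, cc_zero]
theorem gg_zero : gg a 0 = 1 := by rw [gg, Esum_zero, dd_zero]
theorem Dc_zero : Dc a 0 = -a := by
  rw [Dc, Esum_zero, de]; push_cast; rw [cc_one]; ring
theorem Dd_zero : Dd a 0 = Complex.I - a := by
  rw [Dd, Esum_zero, de]; push_cast; rw [dd_one]; ring

theorem summable_cd (z : ℂ) : Summable (fun k => (cc a k - dd a k) * z ^ k) := by
  have h1 := summable_Esum (Mnn a) (hyp_cc (a := a)) z
  have h2 := summable_Esum (Mnn a) (hyp_dd (a := a)) z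
  apply (h1.sub h2).congr
  intro k; ring

theorem SYS1 (ha : a ≠ 0) (z : ℂ) :
    Complex.I * z * Dc a z = (a:ℂ) * (ff a z - gg a z) := by
  have h1 := summable_Esum (Mnn a) (hyp_cc (a := a)) z
  have h2 := summable_Esum (Mnn a) (hyp_dd (a := a)) z
  have hcdsum := summable_cd a z
  have lhs_eq : Complex.I * z * Dc a z
      = ∑' k : ℕ, ((a:ℂ) * ((cc a (k+1) - dd a (k+1)) * z ^ (k+1))) := by
    rw [Dc, Esum, ← tsum_mul_left]
    apply tsum_congr
    intro k
    have hr := R1 (a := a) (k+1) ha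
    push_cast at hr
    simp only [de]
    linear_combination (z^(k+1)) * hr + (((k:ℂ)+1) * cc a (k+1) * Complex.I) * (pow_succ z k).symm
  have rhs_eq : (a:ℂ) * (ff a z - gg a z)
      = ∑' k : ℕ, ((a:ℂ) * ((cc a (k+1) - dd a (k+1)) * z ^ (k+1))) := by
    rw [ff, gg, Esum, Esum, ← Summable.tsum_sub h1 h2]
    have : (∑' k : ℕ, (cc a k * z ^ k - dd a k * z ^ k))
        = ∑' k : ℕ, ((cc a k - dd a k) * z ^ k) := by
      apply tsum_congr; intro k; ring
    rw [this, Summable.tsum_eq_zero_add hcdsum]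
    rw [cc_zero, dd_zero]
    simp only [sub_self, pow_zero, zero_mul, zero_add]
    rw [← tsum_mul_left]
  rw [lhs_eq, rhs_eq]

theorem SYS2 (ha : a ≠ 0) (z : ℂ) :
    Complex.I * z * Dd a z = (a:ℂ) * ff a z - ((a:ℂ) + z) * gg a z := by
  have h1 := summable_Esum (Mnn a) (hyp_cc (a := a)) z
  have h2 := summable_Esum (Mnn a) (hyp_dd (a := a)) z
  have hcdsum := summable_cd a z
  have hshift : Summable (fun k : ℕ => (cc a (k+1) - dd a (k+1)) * z ^ (k+1)) := by
    apply (summable_nat_add_iff 1).mpr hcdsum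
  have hzg : Summable (fun k : ℕ => dd a k * z ^ (k+1)) := by
    apply Summable.of_norm
    have := summable_norm_Esum (Mnn a) (hyp_dd (a := a)) (norm_nonneg z) |>.mul_right ‖z‖
    apply this.congr
    intro k
    rw [norm_mul, norm_pow, pow_succ]
    ring
  have lhs_eq : Complex.I * z * Dd a z
      = ∑' k : ℕ, (Complex.I * ((k:ℂ)+1) * dd a (k+1)) * z ^ (k+1) := by
    rw [Dd, Esum, ← tsum_mul_left]
    apply tsum_congr
    intro k
    simp only [de]
    rw [pow_succ]
    ring
  have rhs_eq : (a:ℂ) * ff a z - ((a:ℂ) + z) * gg a z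
      = ∑' k : ℕ, (((a:ℂ) * (cc a (k+1) - dd a (k+1)) - dd a k) * z ^ (k+1)) := by
    have e1 : (a:ℂ) * ff a z - ((a:ℂ) + z) * gg a z
        = (a:ℂ) * (ff a z - gg a z) - z * gg a z := by ring
    have e2 : (a:ℂ) * (ff a z - gg a z)
        = ∑' k : ℕ, ((a:ℂ) * ((cc a (k+1) - dd a (k+1)) * z ^ (k+1))) := by
      rw [ff, gg, Esum, Esum, ← Summable.tsum_sub h1 h2]
      have : (∑' k : ℕ, (cc a k * z ^ k - dd a k * z ^ k))
          = ∑' k : ℕ, ((cc a k - dd a k) * z ^ k) := by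
        apply tsum_congr; intro k; ring
      rw [this, Summable.tsum_eq_zero_add hcdsum]
      rw [cc_zero, dd_zero]
      simp only [sub_self, pow_zero, zero_mul, zero_add]
      rw [← tsum_mul_left]
    have e3 : z * gg a z = ∑' k : ℕ, dd a k * z ^ (k+1) := by
      rw [gg, Esum, ← tsum_mul_left]
      apply tsum_congr
      intro k
      rw [pow_succ]
      ring
    rw [e1, e2, e3]
    have hsl : Summable (fun k : ℕ => (a:ℂ) * ((cc a (k+1) - dd a (k+1)) * z ^ (k+1))) :=
      hshift.mul_left _
    rw [← Summable.tsum_sub hsl hzg]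
    apply tsum_congr
    intro k
    ring
  rw [lhs_eq, rhs_eq]
  apply tsum_congr
  intro k
  have hr := R2 (a := a) k ha
  push_cast at hr
  linear_combination (z^(k+1)) * hr

end OFO

namespace OFO
open Complex

variable (a : ℝ)

theorem ofReal_two_dot (u v : ℂ) :
    ((2*(u.re*v.re + u.im*v.im) : ℝ) : ℂ) = u * (starRingEnd ℂ) v + (starRingEnd ℂ) u * v := by
  apply Complex.ext <;>
    simp [Complex.mul_re, Complex.mul_im, Complex.add_re, Complex.add_im] <;> ring

theorem ofReal_two_re (u : ℂ) : ((2*u.re : ℝ) : ℂ) = u + (starRingEnd ℂ) u := by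
  rw [Complex.add_conj]

theorem hline_f (z : ℂ) (t : ℝ) :
    HasDerivAt (fun s : ℝ => ff a ((s:ℂ)*z)) (z * Dc a ((t:ℂ)*z)) t := by
  have h1 : HasDerivAt (fun w : ℂ => ff a (w*z)) (Dc a ((t:ℂ)*z) * z) ((t:ℝ):ℂ) :=
    (hasDerivAt_ff a ((t:ℂ)*z)).comp ((t:ℝ):ℂ) (hasDerivAt_mul_const z)
  have h2 := h1.comp_ofReal
  simpa [Function.comp, mul_comm] using h2

theorem hline_g (z : ℂ) (t : ℝ) :
    HasDerivAt (fun s : ℝ => gg a ((s:ℂ)*z)) (z * Dd a ((t:ℂ)*z)) t := by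
  have h1 : HasDerivAt (fun w : ℂ => gg a (w*z)) (Dd a ((t:ℂ)*z) * z) ((t:ℝ):ℂ) :=
    (hasDerivAt_gg a ((t:ℂ)*z)).comp ((t:ℝ):ℂ) (hasDerivAt_mul_const z)
  have h2 := h1.comp_ofReal
  simpa [Function.comp, mul_comm] using h2

theorem hasDerivAt_normSq_comp {F : ℝ → ℂ} {F' : ℂ} {t : ℝ} (h : HasDerivAt F F' t) :
    HasDerivAt (fun s => Complex.normSq (F s))
      (2*((F t).re*F'.re + (F t).im*F'.im)) t := by
  have hre : HasDerivAt (fun s => (F s).re) F'.re t := by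
    have := Complex.reCLM.hasFDerivAt.comp_hasDerivAt t h
    exact this
  have him : HasDerivAt (fun s => (F s).im) F'.im t := by
    have := Complex.imCLM.hasFDerivAt.comp_hasDerivAt t h
    exact this
  have h2 := (hre.mul hre).add (him.mul him)
  have hfun : (fun s => Complex.normSq (F s))
      = fun s => (F s).re*(F s).re + (F s).im*(F s).im := by
    funext s; exact Complex.normSq_apply _
  rw [hfun]
  exact h2.congr_deriv (by ring)

end OFO

namespace OFO
open Complex

variable (a : ℝ)

theorem phi_val (ha : a ≠ 0) (z : ℂ) (t : ℝ) :
    2*((ff a ((t:ℂ)*z)).re*(z * Dc a ((t:ℂ)*z)).re + (ff a ((t:ℂ)*z)).im*(z * Dc a ((t:ℂ)*z)).im)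
    - 2*((gg a ((t:ℂ)*z)).re*(z * Dd a ((t:ℂ)*z)).re + (gg a ((t:ℂ)*z)).im*(z * Dd a ((t:ℂ)*z)).im)
    = 2 * z.im * Complex.normSq (gg a ((t:ℂ)*z)) := by
  rcases eq_or_ne t 0 with rfl | ht
  · simp only [Complex.ofReal_zero, zero_mul, ff_zero, gg_zero, Dc_zero, Dd_zero]
    simp [Complex.mul_re, Complex.mul_im, Complex.normSq_one]
    ring
  · set w : ℂ := (t:ℂ)*z with hw
    set f := ff a w; set g := gg a w
    have hP : (t:ℂ) * (z * Dc a w) = -Complex.I*(a:ℂ)*(f - g) := by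
      have hS := SYS1 a ha w
      linear_combination (-Complex.I) * hS + (Dc a w * w) * Complex.I_mul_I
    have hQ : (t:ℂ) * (z * Dd a w) = -Complex.I*((a:ℂ)*f - ((a:ℂ)+(t:ℂ)*z)*g) := by
      have hS := SYS2 a ha w
      linear_combination (-Complex.I) * hS + (Dd a w * w) * Complex.I_mul_I
    have hPc : (t:ℂ) * (starRingEnd ℂ) (z * Dc a w)
        = Complex.I*(a:ℂ)*((starRingEnd ℂ) f - (starRingEnd ℂ) g) := by
      have := congrArg (starRingEnd ℂ) hP
      simpa [map_mul, map_sub, Complex.conj_ofReal, Complex.conj_I] using this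
    have hQc : (t:ℂ) * (starRingEnd ℂ) (z * Dd a w)
        = Complex.I*((a:ℂ)*(starRingEnd ℂ) f
            - ((a:ℂ)+(t:ℂ)*(starRingEnd ℂ) z)*(starRingEnd ℂ) g) := by
      have := congrArg (starRingEnd ℂ) hQ
      simpa [map_mul, map_sub, map_add, Complex.conj_ofReal, Complex.conj_I] using this
    -- lift the real goal to ℂ
    rw [← Complex.ofReal_inj]
    have hsplit : ((2*((f).re*(z * Dc a w).re + (f).im*(z * Dc a w).im)
        - 2*((g).re*(z * Dd a w).re + (g).im*(z * Dd a w).im) : ℝ) : ℂ)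
        = ((2*((f).re*(z * Dc a w).re + (f).im*(z * Dc a w).im) : ℝ) : ℂ)
          - ((2*((g).re*(z * Dd a w).re + (g).im*(z * Dd a w).im) : ℝ) : ℂ) := by
      push_cast; ring
    have hrhs : ((2 * z.im * Complex.normSq (gg a w) : ℝ) : ℂ)
        = ((2*z.im : ℝ) : ℂ) * ((Complex.normSq (gg a w) : ℝ) : ℂ) := by
      push_cast; ring
    rw [hsplit, hrhs, ofReal_two_dot f (z * Dc a w), ofReal_two_dot g (z * Dd a w),
      ← Complex.mul_conj]
    have him : ((2*z.im : ℝ) : ℂ) = (z - (starRingEnd ℂ) z) * (-Complex.I) := by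
      have h1 := Complex.sub_conj z
      push_cast at h1 ⊢
      linear_combination Complex.I * h1 + (2*(z.im:ℂ)) * Complex.I_mul_I
    rw [him]
    have htne : ((t:ℝ):ℂ) ≠ 0 := Complex.ofReal_ne_zero.mpr ht
    apply mul_left_cancel₀ htne
    linear_combination (f)*hPc + ((starRingEnd ℂ) f)*hP - (g)*hQc - ((starRingEnd ℂ) g)*hQ

end OFO

namespace OFO
open Complex

variable (a : ℝ)

theorem hasDerivAt_phi (ha : a ≠ 0) (z : ℂ) (t : ℝ) :
    HasDerivAt (fun s : ℝ => Complex.normSq (ff a ((s:ℂ)*z)) - Complex.normSq (gg a ((s:ℂ)*z)))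
      (2 * z.im * Complex.normSq (gg a ((t:ℂ)*z))) t := by
  have hf := hasDerivAt_normSq_comp (hline_f a z t)
  have hg := hasDerivAt_normSq_comp (hline_g a z t)
  have h := hf.sub hg
  have hval := phi_val a ha z t
  rw [hval] at h
  exact h

theorem cont_gz (z : ℂ) : Continuous (fun t : ℝ => Complex.normSq (gg a ((t:ℂ)*z))) := by
  apply Complex.continuous_normSq.comp
  exact (continuous_gg a).comp (Complex.continuous_ofReal.mul continuous_const)

theorem KEY (ha : a ≠ 0) (z : ℂ) :
    Complex.normSq (ff a z) - Complex.normSq (gg a z)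
      = 2 * z.im * ∫ t in (0:ℝ)..1, Complex.normSq (gg a ((t:ℂ)*z)) := by
  have hint : IntervalIntegrable (fun t : ℝ => 2 * z.im * Complex.normSq (gg a ((t:ℂ)*z)))
      MeasureTheory.volume 0 1 :=
    (continuous_const.mul (cont_gz a z)).intervalIntegrable 0 1
  have h := intervalIntegral.integral_eq_sub_of_hasDerivAt
    (f := fun s : ℝ => Complex.normSq (ff a ((s:ℂ)*z)) - Complex.normSq (gg a ((s:ℂ)*z)))
    (fun t _ => hasDerivAt_phi a ha z t) hint
  rw [intervalIntegral.integral_const_mul] at h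
  simp only [Complex.ofReal_one, one_mul, Complex.ofReal_zero, zero_mul,
    ff_zero, gg_zero, Complex.normSq_one, sub_self, sub_zero] at h
  linarith [h]

theorem int_pos {h : ℝ → ℝ} (hc : Continuous h) (hnn : ∀ t, 0 ≤ h t) (h0 : h 0 = 1)
    {x : ℝ} (hx : 0 < x) : 0 < ∫ t in (0:ℝ)..x, h t := by
  obtain ⟨δ, hδpos, hδ⟩ := Metric.continuousAt_iff.mp hc.continuousAt (1/2) (by norm_num)
  set δ' : ℝ := min (δ/2) x with hδ'
  have hδ'pos : 0 < δ' := lt_min (by linarith) hx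
  have hδ'x : δ' ≤ x := min_le_right _ _
  have hlow : ∀ t ∈ Set.Icc (0:ℝ) δ', (1:ℝ)/2 ≤ h t := by
    intro t ⟨ht0, ht1⟩
    have : dist t 0 < δ := by
      rw [Real.dist_eq, sub_zero, _root_.abs_of_nonneg ht0]
      calc t ≤ δ' := ht1
        _ ≤ δ/2 := min_le_left _ _
        _ < δ := by linarith
    have := hδ this
    rw [Real.dist_eq, h0] at this
    have := abs_lt.mp this
    linarith [this.1]
  have hsplit : (∫ t in (0:ℝ)..δ', h t) + (∫ t in δ'..x, h t) = ∫ t in (0:ℝ)..x, h t :=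
    intervalIntegral.integral_add_adjacent_intervals (hc.intervalIntegrable _ _)
      (hc.intervalIntegrable _ _)
  have h1 : δ' * (1/2) ≤ ∫ t in (0:ℝ)..δ', h t := by
    have := intervalIntegral.integral_mono_on hδ'pos.le
      (intervalIntegrable_const (μ := MeasureTheory.volume) (c := (1:ℝ)/2)) (hc.intervalIntegrable _ _) hlow
    rw [intervalIntegral.integral_const] at this
    simpa [smul_eq_mul] using this
  have h2 : 0 ≤ ∫ t in δ'..x, h t :=
    intervalIntegral.integral_nonneg hδ'x (fun t _ => hnn t)
  have : 0 < δ' * (1/2) := by positivity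
  linarith

theorem int_ne {h : ℝ → ℝ} (hc : Continuous h) (hnn : ∀ t, 0 ≤ h t) (h0 : h 0 = 1)
    {x : ℝ} (hx : x ≠ 0) : (∫ t in (0:ℝ)..x, h t) ≠ 0 := by
  rcases hx.lt_or_gt with hneg | hpos
  · have hrefl : (∫ t in x..(0:ℝ), h t) = ∫ t in (0:ℝ)..(-x), h (-t) := by
      rw [intervalIntegral.integral_comp_neg]
      norm_num
    have hpos' : 0 < ∫ t in (0:ℝ)..(-x), h (-t) := by
      apply int_pos (hc.comp continuous_neg) (fun t => hnn _) (by simpa using h0) (by linarith)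
    rw [intervalIntegral.integral_symm]
    rw [hrefl]
    exact neg_ne_zero.mpr (ne_of_gt hpos')
  · exact ne_of_gt (int_pos hc hnn h0 hpos)

theorem int1_pos (ha : a ≠ 0) (z : ℂ) :
    0 < ∫ t in (0:ℝ)..1, Complex.normSq (gg a ((t:ℂ)*z)) := by
  apply int_pos (cont_gz a z) (fun t => Complex.normSq_nonneg _)
  · simp [gg_zero]
  · norm_num

end OFO

namespace OFO
open Complex

variable (a : ℝ)

noncomputable def qq (x : ℝ) : ℝ := Complex.normSq (ff a ((x:ℝ):ℂ))
noncomputable def rr (x : ℝ) : ℝ := (gg a ((x:ℝ):ℂ) * (starRingEnd ℂ) (ff a ((x:ℝ):ℂ))).re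
noncomputable def QQ (x : ℝ) : ℝ := ∫ t in (0:ℝ)..x, qq a t
noncomputable def psi (x : ℝ) : ℝ := x * qq a x + 2*a*(qq a x - rr a x) - QQ a x

theorem cont_qq : Continuous (qq a) :=
  Complex.continuous_normSq.comp ((continuous_ff a).comp Complex.continuous_ofReal)

theorem qq_nonneg (x : ℝ) : 0 ≤ qq a x := Complex.normSq_nonneg _

theorem qq_zero : qq a 0 = 1 := by simp [qq, ff_zero]

theorem hline_f' (x : ℝ) : HasDerivAt (fun s : ℝ => ff a ((s:ℝ):ℂ)) (Dc a ((x:ℝ):ℂ)) x :=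
  (hasDerivAt_ff a ((x:ℝ):ℂ)).comp_ofReal

theorem hline_g' (x : ℝ) : HasDerivAt (fun s : ℝ => gg a ((s:ℝ):ℂ)) (Dd a ((x:ℝ):ℂ)) x :=
  (hasDerivAt_gg a ((x:ℝ):ℂ)).comp_ofReal

theorem hasDerivAt_qq (x : ℝ) :
    HasDerivAt (qq a)
      (2*((ff a (x:ℂ)).re*(Dc a (x:ℂ)).re + (ff a (x:ℂ)).im*(Dc a (x:ℂ)).im)) x :=
  hasDerivAt_normSq_comp (hline_f' a x)

theorem hasDerivAt_rr (x : ℝ) :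
    HasDerivAt (rr a)
      ((Dd a (x:ℂ) * (starRingEnd ℂ) (ff a (x:ℂ))
        + gg a (x:ℂ) * (starRingEnd ℂ) (Dc a (x:ℂ))).re) x := by
  have hconj : HasDerivAt (fun s : ℝ => (starRingEnd ℂ) (ff a ((s:ℝ):ℂ)))
      ((starRingEnd ℂ) (Dc a ((x:ℝ):ℂ))) x := (hline_f' a x).star
  have hmul := (hline_g' a x).mul hconj
  exact Complex.reCLM.hasFDerivAt.comp_hasDerivAt x hmul

theorem psi_deriv_val (ha : a ≠ 0) (x : ℝ) :
    x * (2*((ff a (x:ℂ)).re*(Dc a (x:ℂ)).re + (ff a (x:ℂ)).im*(Dc a (x:ℂ)).im))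
    + 2*a*((2*((ff a (x:ℂ)).re*(Dc a (x:ℂ)).re + (ff a (x:ℂ)).im*(Dc a (x:ℂ)).im))
        - (Dd a (x:ℂ) * (starRingEnd ℂ) (ff a (x:ℂ))
          + gg a (x:ℂ) * (starRingEnd ℂ) (Dc a (x:ℂ))).re) = 0 := by
  rcases eq_or_ne x 0 with rfl | hx
  · simp only [Complex.ofReal_zero, ff_zero, gg_zero, Dc_zero, Dd_zero]
    simp [Complex.mul_re, Complex.conj_re, Complex.conj_im, Complex.sub_re, Complex.sub_im]
    exact Or.inr (by ring)
  · set f := ff a (x:ℂ) with hf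
    set g := gg a (x:ℂ) with hg
    have hP : (x:ℂ) * Dc a (x:ℂ) = -Complex.I*(a:ℂ)*(f - g) := by
      have hS := SYS1 a ha (x:ℂ)
      linear_combination (-Complex.I) * hS + (Dc a (x:ℂ) * (x:ℂ)) * Complex.I_mul_I
    have hQ : (x:ℂ) * Dd a (x:ℂ) = -Complex.I*((a:ℂ)*f - ((a:ℂ)+(x:ℂ))*g) := by
      have hS := SYS2 a ha (x:ℂ)
      linear_combination (-Complex.I) * hS + (Dd a (x:ℂ) * (x:ℂ)) * Complex.I_mul_I
    have hPc : (x:ℂ) * (starRingEnd ℂ) (Dc a (x:ℂ))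
        = Complex.I*(a:ℂ)*((starRingEnd ℂ) f - (starRingEnd ℂ) g) := by
      have := congrArg (starRingEnd ℂ) hP
      simpa [map_mul, map_sub, Complex.conj_ofReal, Complex.conj_I] using this
    have hQc : (x:ℂ) * (starRingEnd ℂ) (Dd a (x:ℂ))
        = Complex.I*((a:ℂ)*(starRingEnd ℂ) f - ((a:ℂ)+(x:ℂ))*(starRingEnd ℂ) g) := by
      have := congrArg (starRingEnd ℂ) hQ
      simpa [map_mul, map_sub, map_add, Complex.conj_ofReal, Complex.conj_I] using this
    rw [← Complex.ofReal_inj]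
    set U := Dd a (x:ℂ) * (starRingEnd ℂ) f + g * (starRingEnd ℂ) (Dc a (x:ℂ)) with hU
    have h2re : ∀ u : ℂ, ((u.re : ℝ) : ℂ) = (u + (starRingEnd ℂ) u)/2 := by
      intro u
      rw [eq_div_iff (two_ne_zero : (2:ℂ) ≠ 0), Complex.add_conj]
      push_cast
      ring
    have hexp : ((x * (2*((f).re*(Dc a (x:ℂ)).re + (f).im*(Dc a (x:ℂ)).im))
        + 2*a*((2*((f).re*(Dc a (x:ℂ)).re + (f).im*(Dc a (x:ℂ)).im)) - U.re) : ℝ) : ℂ)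
        = ((x:ℝ):ℂ) * ((2*((f).re*(Dc a (x:ℂ)).re + (f).im*(Dc a (x:ℂ)).im) : ℝ) : ℂ)
          + 2*(a:ℂ)*(((2*((f).re*(Dc a (x:ℂ)).re + (f).im*(Dc a (x:ℂ)).im) : ℝ) : ℂ)
            - ((U.re : ℝ) : ℂ)) := by
      push_cast
      ring
    rw [hexp, ofReal_two_dot f (Dc a (x:ℂ)), h2re U, hU]
    have hcU : (starRingEnd ℂ) (Dd a (x:ℂ) * (starRingEnd ℂ) f + g * (starRingEnd ℂ) (Dc a (x:ℂ)))
        = (starRingEnd ℂ) (Dd a (x:ℂ)) * f + (starRingEnd ℂ) g * Dc a (x:ℂ) := by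
      simp [map_add, map_mul, Complex.conj_conj]
    rw [hcU]
    have hxne : ((x:ℝ):ℂ) ≠ 0 := Complex.ofReal_ne_zero.mpr hx
    rw [Complex.ofReal_zero]
    apply mul_left_cancel₀ hxne
    rw [mul_zero]
    linear_combination ((((x:ℂ) + 2*(a:ℂ)) * (starRingEnd ℂ) f - (a:ℂ) * (starRingEnd ℂ) g)) * hP
      + (((x:ℂ) + 2*(a:ℂ)) * f - (a:ℂ) * g) * hPc
      - (a:ℂ) * ((starRingEnd ℂ) f) * hQ - (a:ℂ) * f * hQc

end OFO

namespace OFO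
open Complex

variable (a : ℝ)

theorem hasDerivAt_psi (ha : a ≠ 0) (x : ℝ) : HasDerivAt (psi a) 0 x := by
  have hq := hasDerivAt_qq a x
  have hr := hasDerivAt_rr a x
  have hQ : HasDerivAt (QQ a) (qq a x) x :=
    ((cont_qq a).integral_hasStrictDerivAt 0 x).hasDerivAt
  have h1 : HasDerivAt (fun y : ℝ => y * qq a y)
      (1 * qq a x + x * (2*((ff a (x:ℂ)).re*(Dc a (x:ℂ)).re
        + (ff a (x:ℂ)).im*(Dc a (x:ℂ)).im))) x :=
    (hasDerivAt_id x).mul hq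
  have h2 : HasDerivAt (fun y : ℝ => 2*a*(qq a y - rr a y))
      (2*a*((2*((ff a (x:ℂ)).re*(Dc a (x:ℂ)).re + (ff a (x:ℂ)).im*(Dc a (x:ℂ)).im))
        - (Dd a (x:ℂ) * (starRingEnd ℂ) (ff a (x:ℂ))
          + gg a (x:ℂ) * (starRingEnd ℂ) (Dc a (x:ℂ))).re)) x :=
    (hq.sub hr).const_mul (2*a)
  have h3 := (h1.add h2).sub hQ
  have : (1 * qq a x + x * (2*((ff a (x:ℂ)).re*(Dc a (x:ℂ)).re
        + (ff a (x:ℂ)).im*(Dc a (x:ℂ)).im))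
      + 2*a*((2*((ff a (x:ℂ)).re*(Dc a (x:ℂ)).re + (ff a (x:ℂ)).im*(Dc a (x:ℂ)).im))
        - (Dd a (x:ℂ) * (starRingEnd ℂ) (ff a (x:ℂ))
          + gg a (x:ℂ) * (starRingEnd ℂ) (Dc a (x:ℂ))).re)) - qq a x = 0 := by
    have hval := psi_deriv_val a ha x
    linarith [hval]
  rw [this] at h3
  exact h3

theorem psi_eq_zero (ha : a ≠ 0) (x : ℝ) : psi a x = 0 := by
  have hconst : psi a x = psi a 0 :=
    is_const_of_deriv_eq_zero (fun y => (hasDerivAt_psi a ha y).differentiableAt)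
      (fun y => (hasDerivAt_psi a ha y).deriv) x 0
  rw [hconst, psi, QQ]
  simp [qq_zero, rr, ff_zero, gg_zero]

theorem ff_real_ne (ha : a ≠ 0) (x : ℝ) : ff a ((x:ℝ):ℂ) ≠ 0 := by
  rcases eq_or_ne x 0 with rfl | hx
  · rw [Complex.ofReal_zero, ff_zero]; exact one_ne_zero
  · intro h0
    have hq0 : qq a x = 0 := by rw [qq, h0]; simp
    have hr0 : rr a x = 0 := by rw [rr, h0]; simp
    have hψ := psi_eq_zero a ha x
    rw [psi, hq0, hr0] at hψ
    simp at hψ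
    have := int_ne (cont_qq a) (qq_nonneg a) (qq_zero a) hx
    rw [QQ] at hψ
    exact this hψ

theorem gg_normSq_eq (ha : a ≠ 0) (x : ℝ) :
    Complex.normSq (gg a ((x:ℝ):ℂ)) = Complex.normSq (ff a ((x:ℝ):ℂ)) := by
  have h := KEY a ha ((x:ℝ):ℂ)
  rw [Complex.ofReal_im] at h
  simp at h
  linarith [h]

theorem gg_real_ne (ha : a ≠ 0) (x : ℝ) : gg a ((x:ℝ):ℂ) ≠ 0 := by
  intro h0
  have := gg_normSq_eq a ha x
  rw [h0] at this
  simp at this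
  exact ff_real_ne a ha x (Complex.normSq_eq_zero.mp this.symm)

end OFO

open Filter Set

/-- The confluent hypergeometric function `₁F₁(a; 1; z) = ∑_{k≥0} ((a)_k/(k!)²) z^k`,
where `(a)_k` is the Pochhammer symbol. -/
noncomputable def oneFone (a z : ℂ) : ℂ :=
  ∑' k : ℕ, ((ascPochhammer ℂ k).eval a / ((Nat.factorial k : ℂ)) ^ 2) * z ^ k

namespace OFO

variable (a : ℝ)

theorem oneFone_f (z : ℂ) : oneFone (Complex.I * (a:ℂ)) (Complex.I * z) = ff a z := by
  rw [oneFone, ff, Esum]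
  apply tsum_congr; intro k
  rw [cc, mul_pow]
  ring

theorem oneFone_g (z : ℂ) : oneFone (1 + Complex.I * (a:ℂ)) (Complex.I * z) = gg a z := by
  rw [oneFone, gg, Esum]
  apply tsum_congr; intro k
  rw [dd, mul_pow]
  ring

end OFO

theorem stmt12 (a : ℝ) (ha : a ≠ 0) :
    (∀ x : ℝ, oneFone (Complex.I * a) (Complex.I * x) ≠ 0 ∧
        oneFone (1 + Complex.I * a) (Complex.I * x) ≠ 0) ∧
    (∀ z : ℂ, oneFone (Complex.I * a) (Complex.I * z) = 0 → z.im < 0) ∧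
    (∀ z : ℂ, oneFone (1 + Complex.I * a) (Complex.I * z) = 0 → 0 < z.im) ∧
    (∀ z : ℂ, 0 ≤ z.im →
      ‖oneFone (1 + Complex.I * a) (Complex.I * z)‖ ≤ ‖oneFone (Complex.I * a) (Complex.I * z)‖ ∧
      (‖oneFone (1 + Complex.I * a) (Complex.I * z)‖ = ‖oneFone (Complex.I * a) (Complex.I * z)‖
        ↔ z.im = 0)) := by
  refine ⟨?_, ?_, ?_, ?_⟩
  · intro x
    rw [OFO.oneFone_f, OFO.oneFone_g]
    exact ⟨OFO.ff_real_ne a ha x, OFO.gg_real_ne a ha x⟩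
  · intro z hz
    rw [OFO.oneFone_f] at hz
    by_contra hle
    push_neg at hle
    rcases eq_or_lt_of_le hle with heq | hlt
    · have hzr : ((z.re : ℝ) : ℂ) = z := Complex.ext (by simp) (by simp [← heq])
      exact OFO.ff_real_ne a ha z.re (by rw [hzr]; exact hz)
    · have hkey := OFO.KEY a ha z
      have hpos := OFO.int1_pos a ha z
      rw [hz] at hkey
      simp only [map_zero, zero_sub] at hkey
      nlinarith [Complex.normSq_nonneg (OFO.gg a z)]
  · intro z hz
    rw [OFO.oneFone_g] at hz
    by_contra hle
    push_neg at hle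
    rcases eq_or_lt_of_le hle with heq | hlt
    · have hzr : ((z.re : ℝ) : ℂ) = z := Complex.ext (by simp) (by simp [heq])
      exact OFO.gg_real_ne a ha z.re (by rw [hzr]; exact hz)
    · have hkey := OFO.KEY a ha z
      have hpos := OFO.int1_pos a ha z
      rw [hz] at hkey
      simp only [map_zero, sub_zero] at hkey
      nlinarith [Complex.normSq_nonneg (OFO.ff a z)]
  · intro z him
    rw [OFO.oneFone_f, OFO.oneFone_g]
    have hkey := OFO.KEY a ha z
    have hpos := OFO.int1_pos a ha z
    have hnsle : Complex.normSq (OFO.gg a z) ≤ Complex.normSq (OFO.ff a z) := by nlinarith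
    refine ⟨?_, ?_, ?_⟩
    · rw [Complex.norm_def, Complex.norm_def]
      exact Real.sqrt_le_sqrt hnsle
    · intro hne
      have heq2 : Complex.normSq (OFO.gg a z) = Complex.normSq (OFO.ff a z) := by
        rw [← Complex.sq_norm, ← Complex.sq_norm, hne]
      rw [← heq2, sub_self] at hkey
      have h2 : 2 * z.im * (∫ t in (0:ℝ)..1, Complex.normSq (OFO.gg a (((t:ℝ):ℂ)*z))) = 0 :=
        hkey.symm
      rcases mul_eq_zero.mp h2 with h3 | h3
      · rcases mul_eq_zero.mp h3 with h4 | h4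
        · norm_num at h4
        · exact h4
      · exact absurd h3 (ne_of_gt hpos)
    · intro him0
      have hzr : ((z.re : ℝ) : ℂ) = z := Complex.ext (by simp) (by simp [him0])
      have hns := OFO.gg_normSq_eq a ha z.re
      rw [hzr] at hns
      rw [Complex.norm_def, Complex.norm_def, hns]
end

section
/- For every a ∈ ℝ, the function 𝔊(x) = x − 2·arg ₁F₁(ia; 1; ix) (with the continuous determination of the argument normalized by 𝔊(0) = 0) is strictly increasing on ℝ. -/
open Filter Set

namespace Stmt14Aux

open Complex

noncomputable def cc (a : ℝ) (k : ℕ) : ℂ :=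
  (ascPochhammer ℂ k).eval (Complex.I * a) * Complex.I ^ k / ((Nat.factorial k : ℂ)) ^ 2

lemma cc_zero (a : ℝ) : cc a 0 = 1 := by
  simp [cc]

lemma cc_one (a : ℝ) : cc a 1 = -a := by
  simp [cc]
  have : Complex.I * ↑a * Complex.I = (Complex.I^2) * a := by ring
  rw [this, Complex.I_sq]; ring

lemma cc_rec (a : ℝ) (k : ℕ) :
    ((k : ℂ) + 1) ^ 2 * cc a (k + 1) = (Complex.I * k - a) * cc a k := by
  have hfac : ((Nat.factorial (k+1) : ℂ)) = ((k:ℂ)+1) * (Nat.factorial k : ℂ) := by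
    push_cast [Nat.factorial_succ]; ring
  have hpoch : (ascPochhammer ℂ (k+1)).eval (Complex.I * a)
      = (ascPochhammer ℂ k).eval (Complex.I * a) * (Complex.I * a + k) := by
    rw [ascPochhammer_succ_right]
    simp [Polynomial.eval_mul]
  have hk1 : ((k:ℂ) + 1) ≠ 0 := by
    exact_mod_cast (Nat.cast_add_one_ne_zero k : ((k:ℂ)+1) ≠ 0)
  have hfk : (Nat.factorial k : ℂ) ≠ 0 := by
    exact_mod_cast Nat.cast_ne_zero.mpr (Nat.factorial_ne_zero k)
  rw [cc, cc, hfac, hpoch]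
  field_simp
  ring_nf
  simp [pow_succ, Complex.I_sq]
  ring

lemma norm_cc_succ (a : ℝ) (k : ℕ) :
    ‖cc a (k+1)‖ = ‖Complex.I * k - (a:ℂ)‖ * ‖cc a k‖ / ((k:ℝ)+1)^2 := by
  have h := congrArg norm (cc_rec a k)
  rw [norm_mul, norm_mul] at h
  have h2 : ‖((k:ℂ)+1)^2‖ = ((k:ℝ)+1)^2 := by
    rw [norm_pow]
    norm_cast
  rw [h2] at h
  have hpos : (0:ℝ) < ((k:ℝ)+1)^2 := by positivity
  rw [eq_div_iff hpos.ne']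
  linarith [h]

lemma summable_master (a : ℝ) (m : ℕ) (R : ℝ) (hR : 1 ≤ R) :
    Summable (fun k : ℕ => ((k:ℝ)+1)^m * ‖cc a k‖ * R^k) := by
  have hR0 : 0 < R := lt_of_lt_of_le one_pos hR
  obtain ⟨N, hN⟩ := exists_nat_ge (2^(m+1) * (1+|a|) * R)
  apply summable_of_ratio_norm_eventually_le (r := 1/2) (by norm_num)
  filter_upwards [eventually_ge_atTop N] with k hk
  have hk1 : (0:ℝ) < (k:ℝ)+1 := by positivity
  have hkN : 2^(m+1) * (1+|a|) * R ≤ (k:ℝ)+1 := by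
    calc 2^(m+1) * (1+|a|) * R ≤ (N:ℝ) := hN
    _ ≤ (k:ℝ) := by exact_mod_cast hk
    _ ≤ (k:ℝ)+1 := by linarith
  have hnormb : ‖Complex.I * (k:ℂ) - (a:ℂ)‖ ≤ (1+|a|) * ((k:ℝ)+1) := by
    calc ‖Complex.I * (k:ℂ) - (a:ℂ)‖ ≤ ‖Complex.I * (k:ℂ)‖ + ‖(a:ℂ)‖ := norm_sub_le _ _
    _ = (k:ℝ) + |a| := by simp [Complex.norm_I]
    _ ≤ (1+|a|) * ((k:ℝ)+1) := by nlinarith [abs_nonneg a]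
  have hpow : ((k:ℝ)+2)^m ≤ 2^m * ((k:ℝ)+1)^m := by
    calc ((k:ℝ)+2)^m ≤ (2*((k:ℝ)+1))^m := by
          apply pow_le_pow_left₀ (by positivity)
          linarith
    _ = 2^m * ((k:ℝ)+1)^m := mul_pow _ _ _
  have hscalar : ((k:ℝ)+2)^m * ‖Complex.I * (k:ℂ) - (a:ℂ)‖ * R / ((k:ℝ)+1)^2
      ≤ 1/2 * ((k:ℝ)+1)^m := by
    rw [div_le_iff₀ (by positivity)]
    have h1 : ((k:ℝ)+2)^m * ‖Complex.I * (k:ℂ) - (a:ℂ)‖ * R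
        ≤ (2^m * ((k:ℝ)+1)^m) * ((1+|a|) * ((k:ℝ)+1)) * R := by
      have hn0 : (0:ℝ) ≤ ‖Complex.I * (k:ℂ) - (a:ℂ)‖ := norm_nonneg _
      have hp0 : (0:ℝ) ≤ ((k:ℝ)+2)^m := by positivity
      exact mul_le_mul (mul_le_mul hpow hnormb hn0 (by positivity)) le_rfl hR0.le (by positivity)
    have h2 : (2^m * ((k:ℝ)+1)^m) * ((1+|a|) * ((k:ℝ)+1)) * R
        ≤ 1/2 * (((k:ℝ)+1)^m * ((k:ℝ)+1)^2) := by
      have hb : 2^m * (1+|a|) * R * 2 ≤ (k:ℝ)+1 := by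
        have h3 : 2^m * (1+|a|) * R * 2 = (2:ℝ)^(m+1) * (1+|a|) * R := by
          rw [pow_succ]; ring
        linarith [hkN]
      have hpm : (0:ℝ) ≤ ((k:ℝ)+1)^m := by positivity
      have key : 2^m * (1+|a|) * R * ((k:ℝ)+1) * 2 ≤ ((k:ℝ)+1)^2 := by
        nlinarith [hb, hk1.le]
      calc (2^m * ((k:ℝ)+1)^m) * ((1+|a|) * ((k:ℝ)+1)) * R
          = ((k:ℝ)+1)^m * (2^m * (1+|a|) * R * ((k:ℝ)+1)) := by ring
        _ ≤ ((k:ℝ)+1)^m * (((k:ℝ)+1)^2/2) := by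
            apply mul_le_mul_of_nonneg_left (by linarith) hpm
        _ = 1/2 * (((k:ℝ)+1)^m * ((k:ℝ)+1)^2) := by ring
    linarith
  have hterm : ((k:ℝ)+1+1)^m * ‖cc a (k+1)‖ * R^(k+1)
      = (((k:ℝ)+2)^m * ‖Complex.I * (k:ℂ) - (a:ℂ)‖ * R / (((k:ℝ)+1)^2)) * (‖cc a k‖ * R^k) := by
    rw [norm_cc_succ, pow_succ]
    ring_nf
  rw [Real.norm_of_nonneg (by positivity), Real.norm_of_nonneg (by positivity)]
  push_cast
  rw [hterm]
  calc (((k:ℝ)+2)^m * ‖Complex.I * (k:ℂ) - (a:ℂ)‖ * R / (((k:ℝ)+1)^2)) * (‖cc a k‖ * R^k)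
      ≤ (1/2 * ((k:ℝ)+1)^m) * (‖cc a k‖ * R^k) := by
        apply mul_le_mul_of_nonneg_right hscalar (by positivity)
    _ = 1/2 * (((k:ℝ)+1)^m * ‖cc a k‖ * R^k) := by ring

/-- sum of a power series with complex coefficients along the real axis -/
noncomputable def SS (f : ℕ → ℂ) (x : ℝ) : ℂ := ∑' n : ℕ, f n * (x:ℂ)^n

/-- rapid decay property of coefficients -/
def PP (f : ℕ → ℂ) : Prop :=
  ∀ (m : ℕ) (R : ℝ), 1 ≤ R → Summable (fun n : ℕ => ((n:ℝ)+1)^m * ‖f n‖ * R^n)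

/-- the shifted (derivative) coefficients -/
noncomputable def DD (f : ℕ → ℂ) (n : ℕ) : ℂ := ((n:ℂ)+1) * f (n+1)

lemma PP.shift {f : ℕ → ℂ} (hf : PP f) : PP (DD f) := by
  intro m R hR
  have hR0 : 0 < R := lt_of_lt_of_le one_pos hR
  have h := (summable_nat_add_iff 1).2 (hf (m+2) R hR)
  apply Summable.of_nonneg_of_le (fun n => by positivity) _ h
  intro n
  have h1 : ‖DD f n‖ = ((n:ℝ)+1) * ‖f (n+1)‖ := by
    rw [DD, norm_mul]
    congr 1
    rw [show ((n:ℂ)+1) = ((n+1 : ℕ) : ℂ) by push_cast; ring, Complex.norm_natCast]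
    push_cast; ring
  rw [h1]
  have hx : ((n:ℝ)+1)^m * (((n:ℝ)+1) * ‖f (n+1)‖) * R^n
      ≤ (((n:ℝ)+1+1)^(m+2) * ‖f (n+1)‖) * R^n := by
    apply mul_le_mul_of_nonneg_right _ (by positivity)
    have hb : ((n:ℝ)+1)^m * ((n:ℝ)+1) ≤ ((n:ℝ)+1+1)^(m+2) := by
      calc ((n:ℝ)+1)^m * ((n:ℝ)+1) = ((n:ℝ)+1)^(m+1) := by rw [pow_succ]
        _ ≤ ((n:ℝ)+2)^(m+1) := by
            apply pow_le_pow_left₀ (by positivity) (by linarith)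
        _ ≤ ((n:ℝ)+2)^(m+2) := by
            apply pow_le_pow_right₀ (by linarith) (by omega)
        _ = ((n:ℝ)+1+1)^(m+2) := by ring_nf
    calc ((n:ℝ)+1)^m * (((n:ℝ)+1) * ‖f (n+1)‖)
        = (((n:ℝ)+1)^m * ((n:ℝ)+1)) * ‖f (n+1)‖ := by ring
      _ ≤ ((n:ℝ)+1+1)^(m+2) * ‖f (n+1)‖ :=
          mul_le_mul_of_nonneg_right hb (norm_nonneg _)
  calc ((n:ℝ)+1)^m * (((n:ℝ)+1) * ‖f (n+1)‖) * R^n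
      ≤ (((n:ℝ)+1+1)^(m+2) * ‖f (n+1)‖) * R^n := hx
    _ ≤ ((n:ℝ)+1+1)^(m+2) * ‖f (n+1)‖ * R^(n+1) := by
        apply mul_le_mul_of_nonneg_left _ (by positivity)
        calc R^n = R^n * 1 := by ring
          _ ≤ R^n * R := by
              apply mul_le_mul_of_nonneg_left hR (by positivity)
          _ = R^(n+1) := by rw [pow_succ]
    _ = ((((n+1:ℕ)):ℝ)+1)^(m+2) * ‖f (n+1)‖ * R^(n+1) := by push_cast; ring

lemma PP.summable_terms {f : ℕ → ℂ} (hf : PP f) (x : ℝ) :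
    Summable (fun n : ℕ => f n * (x:ℂ)^n) := by
  have hR : (1:ℝ) ≤ |x| + 1 := by linarith [abs_nonneg x]
  apply Summable.of_norm
  apply Summable.of_nonneg_of_le (fun n => norm_nonneg _) _ (hf 0 (|x|+1) hR)
  intro n
  rw [norm_mul, norm_pow]
  have : ‖(x:ℂ)‖ = |x| := by simp [Complex.norm_real]
  rw [this]
  calc ‖f n‖ * |x|^n ≤ ‖f n‖ * (|x|+1)^n := by
        apply mul_le_mul_of_nonneg_left _ (norm_nonneg _)
        exact pow_le_pow_left₀ (abs_nonneg x) (by linarith) n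
    _ = ((n:ℝ)+1)^0 * ‖f n‖ * (|x|+1)^n := by ring

lemma hasDerivAt_SS {f : ℕ → ℂ} (hf : PP f) (x : ℝ) :
    HasDerivAt (SS f) (SS (DD f) x) x := by
  set R : ℝ := |x| + 1 with hRdef
  have hR : (1:ℝ) ≤ R := by rw [hRdef]; linarith [abs_nonneg x]
  have hxR : |x| < R := by simp [hRdef]
  have hu : Summable (fun n : ℕ => ((n:ℝ)+1)^2 * ‖f n‖ * R^n) := hf 2 R hR
  have hbound : ∀ (n : ℕ) (y : ℝ), y ∈ Metric.ball (0:ℝ) R →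
      ‖f n * ((n:ℂ) * (y:ℂ)^(n-1))‖ ≤ ((n:ℝ)+1)^2 * ‖f n‖ * R^n := by
    intro n y hy
    rw [Metric.mem_ball, Real.dist_eq, sub_zero] at hy
    rw [norm_mul, norm_mul, norm_pow]
    have h1 : ‖((n:ℂ))‖ = (n:ℝ) := by simp
    have h2 : ‖(y:ℂ)‖ = |y| := by simp [Complex.norm_real]
    rw [h1, h2]
    have h3 : |y|^(n-1) ≤ R^n := by
      calc |y|^(n-1) ≤ R^(n-1) := pow_le_pow_left₀ (abs_nonneg y) hy.le _
        _ ≤ R^n := pow_le_pow_right₀ hR (Nat.sub_le n 1)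
    have h4 : (n:ℝ) ≤ ((n:ℝ)+1)^2 := by nlinarith [Nat.cast_nonneg (α := ℝ) n]
    calc ‖f n‖ * ((n:ℝ) * |y|^(n-1)) ≤ ‖f n‖ * (((n:ℝ)+1)^2 * R^n) := by
          apply mul_le_mul_of_nonneg_left _ (norm_nonneg _)
          apply mul_le_mul h4 h3 (by positivity) (by positivity)
      _ = ((n:ℝ)+1)^2 * ‖f n‖ * R^n := by ring
  have hg : ∀ (n : ℕ) (y : ℝ), y ∈ Metric.ball (0:ℝ) R →
      HasDerivAt (fun t : ℝ => f n * (t:ℂ)^n) (f n * ((n:ℂ) * (y:ℂ)^(n-1))) y := by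
    intro n y _
    exact ((hasDerivAt_pow n ((y:ℝ):ℂ)).const_mul (f n)).comp_ofReal
  have hx0 : (0:ℝ) ∈ Metric.ball (0:ℝ) R := by
    simp [Metric.mem_ball]; linarith
  have hxx : x ∈ Metric.ball (0:ℝ) R := by
    simpa [Metric.mem_ball, Real.dist_eq] using hxR
  have hmain := hasDerivAt_tsum_of_isPreconnected hu Metric.isOpen_ball
    (convex_ball (0:ℝ) R).isPreconnected hg hbound hx0 (hf.summable_terms 0) hxx
  have hsum : Summable (fun n : ℕ => f n * ((n:ℂ) * (x:ℂ)^(n-1))) := by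
    apply Summable.of_norm
    exact Summable.of_nonneg_of_le (fun n => norm_nonneg _) (fun n => hbound n x hxx) hu
  have heq : (∑' n : ℕ, f n * ((n:ℂ) * (x:ℂ)^(n-1))) = SS (DD f) x := by
    rw [Summable.tsum_eq_zero_add hsum]
    simp only [Nat.cast_zero, zero_mul, mul_zero, zero_add]
    rw [SS]
    apply tsum_congr
    intro n
    rw [DD]
    push_cast
    ring_nf
  rw [SS]
  rw [heq] at hmain
  exact hmain

lemma SS_zero (f : ℕ → ℂ) : SS f 0 = f 0 := by
  rw [SS]
  rw [tsum_eq_single 0]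
  · simp
  · intro n hn
    simp [zero_pow hn]

lemma PP_cc (a : ℝ) : PP (cc a) := fun m R hR => summable_master a m R hR

set_option maxHeartbeats 1000000 in
lemma ode (a : ℝ) (x : ℝ) :
    (x:ℂ) * SS (DD (DD (cc a))) x + (1 - Complex.I * x) * SS (DD (cc a)) x
      + (a:ℂ) * SS (cc a) x = 0 := by
  set f := cc a with hf
  set d := DD f with hd
  set e := DD d with he
  have hPf : PP f := PP_cc a
  have hPd : PP d := hPf.shift
  have hPe : PP e := hPd.shift
  have hsf := hPf.summable_terms x
  have hsd := hPd.summable_terms x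
  have hse := hPe.summable_terms x
  have hs1 : Summable (fun n : ℕ => (e n - Complex.I * d n) * (x:ℂ)^(n+1)) := by
    apply Summable.congr (((hse.mul_left (x:ℂ)).sub ((hsd.mul_left (Complex.I*x)))))
    intro n
    rw [pow_succ]
    ring
  have hs2 : Summable (fun n : ℕ => (d n + (a:ℂ) * f n) * (x:ℂ)^n) := by
    apply Summable.congr (hsd.add (hsf.mul_left (a:ℂ)))
    intro n
    ring
  have h1 : (x:ℂ) * SS e x - Complex.I*x * SS d x
      = ∑' n : ℕ, (e n - Complex.I * d n) * (x:ℂ)^(n+1) := by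
    rw [SS, SS, ← tsum_mul_left, ← tsum_mul_left,
      ← Summable.tsum_sub (hse.mul_left (x:ℂ)) (hsd.mul_left (Complex.I*(x:ℂ)))]
    apply tsum_congr
    intro n
    rw [pow_succ]
    ring
  have h2 : SS d x + (a:ℂ) * SS f x = ∑' n : ℕ, (d n + (a:ℂ) * f n) * (x:ℂ)^n := by
    rw [SS, SS, ← tsum_mul_left, ← Summable.tsum_add hsd (hsf.mul_left (a:ℂ))]
    apply tsum_congr
    intro n
    ring
  have h3 : (∑' n : ℕ, (d n + (a:ℂ) * f n) * (x:ℂ)^n)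
      = ∑' n : ℕ, (d (n+1) + (a:ℂ) * f (n+1)) * (x:ℂ)^(n+1) := by
    rw [Summable.tsum_eq_zero_add hs2]
    have h0 : (d 0 + (a:ℂ) * f 0) * (x:ℂ)^0 = 0 := by
      simp [hd, DD, hf, cc_one, cc_zero]
    rw [h0, zero_add]
  have hcoeff : ∀ n : ℕ, (e n - Complex.I * d n) + (d (n+1) + (a:ℂ) * f (n+1)) = 0 := by
    intro n
    have hr := cc_rec a (n+1)
    have hdn1 : d (n+1) = ((n:ℂ)+2) * f (n+2) := by
      rw [hd, DD]; push_cast; ring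
    have hen : e n = ((n:ℂ)+1) * (((n:ℂ)+2) * f (n+2)) := by
      rw [he, DD, hdn1]
    have hdn : d n = ((n:ℂ)+1) * f (n+1) := by rw [hd, DD]
    rw [hen, hdn1, hdn]
    have hr' : ((n:ℂ)+2)^2 * f (n+2) = (Complex.I * ((n:ℂ)+1) - a) * f (n+1) := by
      have : ((((n+1):ℕ)):ℂ) + 1 = (n:ℂ) + 2 := by push_cast; ring
      rw [← hf] at hr
      rw [this] at hr
      convert hr using 2
      push_cast; ring
    linear_combination hr'
  have hs3 : Summable (fun n : ℕ => (d (n+1) + (a:ℂ) * f (n+1)) * (x:ℂ)^(n+1)) :=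
    (summable_nat_add_iff 1).2 hs2
  have hfinal : (x:ℂ) * SS e x + (1 - Complex.I * x) * SS d x + (a:ℂ) * SS f x
      = ((x:ℂ) * SS e x - Complex.I*x * SS d x) + (SS d x + (a:ℂ) * SS f x) := by ring
  rw [hfinal, h1, h2, h3, ← Summable.tsum_add hs1 hs3]
  have : ∀ n : ℕ, (e n - Complex.I * d n) * (x:ℂ)^(n+1)
      + (d (n+1) + (a:ℂ) * f (n+1)) * (x:ℂ)^(n+1) = 0 := by
    intro n
    have := hcoeff n
    linear_combination (x:ℂ)^(n+1) * this
  calc (∑' n : ℕ, ((e n - Complex.I * d n) * (x:ℂ)^(n+1)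
        + (d (n+1) + (a:ℂ) * f (n+1)) * (x:ℂ)^(n+1)))
      = ∑' _n : ℕ, (0:ℂ) := tsum_congr this
    _ = 0 := tsum_zero

lemma hdCim {f : ℝ → ℂ} {f' : ℂ} {x : ℝ} (h : HasDerivAt f f' x) :
    HasDerivAt (fun t => (f t).im) f'.im x := by
  simpa using ((hasDerivAt_const x Complex.imCLM).clm_apply h)

lemma hdCre {f : ℝ → ℂ} {f' : ℂ} {x : ℝ} (h : HasDerivAt f f' x) :
    HasDerivAt (fun t => (f t).re) f'.re x := by
  simpa using ((hasDerivAt_const x Complex.reCLM).clm_apply h)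

lemma hdConj {f : ℝ → ℂ} {f' : ℂ} {x : ℝ} (h : HasDerivAt f f' x) :
    HasDerivAt (fun t => (starRingEnd ℂ) (f t)) ((starRingEnd ℂ) f') x := by
  have := (hasDerivAt_const x (Complex.conjCLE : ℂ ≃L[ℝ] ℂ).toContinuousLinearMap).clm_apply h
  simpa using this


noncomputable def w (a : ℝ) : ℝ → ℂ := SS (cc a)
noncomputable def w1 (a : ℝ) : ℝ → ℂ := SS (DD (cc a))
noncomputable def w2 (a : ℝ) : ℝ → ℂ := SS (DD (DD (cc a)))
noncomputable def NN (a : ℝ) (x : ℝ) : ℝ := Complex.normSq (w a x)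
noncomputable def KK (a : ℝ) (x : ℝ) : ℝ := (w1 a x * (starRingEnd ℂ) (w a x)).im
noncomputable def JJ (a : ℝ) (x : ℝ) : ℝ := ∫ t in (0:ℝ)..x, NN a t

lemma hasDerivAt_w (a : ℝ) (x : ℝ) : HasDerivAt (w a) (w1 a x) x :=
  hasDerivAt_SS (PP_cc a) x

lemma hasDerivAt_w1 (a : ℝ) (x : ℝ) : HasDerivAt (w1 a) (w2 a x) x :=
  hasDerivAt_SS (PP_cc a).shift x

lemma continuous_w (a : ℝ) : Continuous (w a) := by
  have : Differentiable ℝ (w a) := fun x => (hasDerivAt_w a x).differentiableAt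
  exact this.continuous

lemma continuous_w1 (a : ℝ) : Continuous (w1 a) := by
  have : Differentiable ℝ (w1 a) := fun x => (hasDerivAt_w1 a x).differentiableAt
  exact this.continuous

lemma continuous_NN (a : ℝ) : Continuous (NN a) :=
  Complex.continuous_normSq.comp (continuous_w a)

lemma continuous_KK (a : ℝ) : Continuous (KK a) :=
  Complex.continuous_im.comp ((continuous_w1 a).mul (Complex.continuous_conj.comp (continuous_w a)))

lemma w_zero (a : ℝ) : w a 0 = 1 := by rw [w, SS_zero, cc_zero]
lemma w1_zero (a : ℝ) : w1 a 0 = -a := by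
  rw [w1, SS_zero, DD]
  simp [cc_one]
lemma NN_zero (a : ℝ) : NN a 0 = 1 := by rw [NN, w_zero]; simp
lemma KK_zero (a : ℝ) : KK a 0 = 0 := by
  rw [KK, w_zero, w1_zero]
  simp

lemma NN_nonneg (a : ℝ) (x : ℝ) : 0 ≤ NN a x := Complex.normSq_nonneg _

lemma hasDerivAt_NN (a : ℝ) (x : ℝ) :
    HasDerivAt (NN a) (2 * (w1 a x * (starRingEnd ℂ) (w a x)).re) x := by
  have heq : NN a = fun x => ((w a x) * (starRingEnd ℂ) (w a x)).re := by
    funext t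
    rw [NN, Complex.mul_conj]
    simp
  rw [heq]
  have h := hdCre ((hasDerivAt_w a x).mul (hdConj (hasDerivAt_w a x)))
  convert h using 1
  · rfl
  have hre : ∀ z u : ℂ, (u * (starRingEnd ℂ) z + z * (starRingEnd ℂ) u).re
      = 2 * (u * (starRingEnd ℂ) z).re := by
    intro z u
    simp [Complex.mul_re, Complex.conj_re, Complex.conj_im]
    ring
  exact (hre (w a x) (w1 a x)).symm

lemma hasDerivAt_KK (a : ℝ) (x : ℝ) :
    HasDerivAt (KK a) ((w2 a x * (starRingEnd ℂ) (w a x)).im) x := by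
  have h := hdCim ((hasDerivAt_w1 a x).mul (hdConj (hasDerivAt_w a x)))
  have heq : KK a = fun t => (w1 a t * (starRingEnd ℂ) (w a t)).im := rfl
  rw [heq]
  convert h using 1
  · rfl
  have h2 : (w1 a x * (starRingEnd ℂ) (w1 a x)).im = 0 := by
    rw [Complex.mul_conj]
    simp
  rw [Complex.add_im, h2, add_zero]

lemma hasDerivAt_JJ (a : ℝ) (x : ℝ) : HasDerivAt (JJ a) (NN a x) x :=
  ((continuous_NN a).integral_hasStrictDerivAt 0 x).hasDerivAt

lemma star_identity (a : ℝ) (x : ℝ) :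
    x * KK a x = x * NN a x / 2 - JJ a x / 2 := by
  set P : ℝ → ℝ := fun t => t * KK a t - t * NN a t / 2 + JJ a t / 2 with hP
  have hder : ∀ t, HasDerivAt P 0 t := by
    intro t
    have h1 : HasDerivAt (fun s => s * KK a s)
        (1 * KK a t + t * (w2 a t * (starRingEnd ℂ) (w a t)).im) t :=
      (hasDerivAt_id t).mul (hasDerivAt_KK a t)
    have h2 : HasDerivAt (fun s => s * NN a s / 2)
        ((1 * NN a t + t * (2 * (w1 a t * (starRingEnd ℂ) (w a t)).re)) / 2) t :=
      ((hasDerivAt_id t).mul (hasDerivAt_NN a t)).div_const 2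
    have h3 : HasDerivAt (fun s => JJ a s / 2) (NN a t / 2) t :=
      (hasDerivAt_JJ a t).div_const 2
    have h : HasDerivAt P _ t := (h1.sub h2).add h3
    convert h using 1
    -- show 0 = KK + t * Im(w2 w̄) - (NN + 2 t Re(w1 w̄))/2 + NN/2
    have hode : (t:ℂ) * w2 a t + (1 - Complex.I * t) * w1 a t + (a:ℂ) * w a t = 0 := ode a t
    have hmul : (t:ℂ) * (w2 a t * (starRingEnd ℂ) (w a t))
        = (Complex.I * t - 1) * (w1 a t * (starRingEnd ℂ) (w a t))
          - (a:ℂ) * (w a t * (starRingEnd ℂ) (w a t)) := by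
      linear_combination ((starRingEnd ℂ) (w a t)) * hode
    have him := congrArg Complex.im hmul
    have e1 : ∀ (r : ℝ) (z : ℂ), ((r:ℂ) * z).im = r * z.im := by
      intro r z; simp [Complex.mul_im]
    have e2 : ∀ (r : ℝ) (z : ℂ), ((Complex.I * (r:ℂ) - 1) * z).im = r * z.re - z.im := by
      intro r z
      simp [Complex.mul_im, Complex.mul_re]
      ring
    rw [Complex.sub_im, e1, e2, e1] at him
    have hw0 : (w a t * (starRingEnd ℂ) (w a t)).im = 0 := by
      rw [Complex.mul_conj]; simp
    rw [hw0, mul_zero, sub_zero] at him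
    have hKdef : (w1 a t * (starRingEnd ℂ) (w a t)).im = KK a t := rfl
    rw [hKdef] at him
    linarith [him]
  have hconst : ∀ t, P t = P 0 := fun t =>
    is_const_of_deriv_eq_zero (fun s => (hder s).differentiableAt) (fun s => (hder s).deriv) t 0
  have hP0 : P 0 = 0 := by
    simp [hP, JJ, intervalIntegral.integral_same]
  have := hconst x
  rw [hP0] at this
  rw [hP] at this
  linarith [this]

lemma NN_pos (a : ℝ) (x : ℝ) : 0 < NN a x := by
  by_contra h
  push_neg at h
  have hx0 : NN a x = 0 := le_antisymm h (NN_nonneg a x)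
  have hw0 : w a x = 0 := Complex.normSq_eq_zero.mp hx0
  have hK0 : KK a x = 0 := by
    rw [KK, hw0]
    simp
  have hJ0 : JJ a x = 0 := by
    have := star_identity a x
    rw [hK0, hx0] at this
    simp at this
    linarith
  have hxne : x ≠ 0 := by
    intro hx
    rw [hx, NN_zero] at hx0
    norm_num at hx0
  -- find a small interval around 0 where NN > 1/2
  have hca : ContinuousAt (NN a) 0 := (continuous_NN a).continuousAt
  have hev : ∀ᶠ t in nhds (0:ℝ), 1/2 < NN a t := by
    apply hca.eventually_const_lt
    rw [NN_zero]; norm_num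
  obtain ⟨δ, hδpos, hδ⟩ := Metric.eventually_nhds_iff.mp hev
  have hint : ∀ u v : ℝ, IntervalIntegrable (NN a) MeasureTheory.volume u v :=
    fun u v => (continuous_NN a).intervalIntegrable u v
  rcases lt_or_gt_of_ne hxne with hneg | hpos
  · -- x < 0 : JJ a x < 0
    set c : ℝ := max (-δ/2) x with hc
    have hcx : x ≤ c := le_max_right _ _
    have hcneg : c < 0 := by
      apply max_lt _ hneg
      linarith
    have hcd : -δ/2 ≤ c := le_max_left _ _
    have hpos1 : 0 < ∫ t in c..(0:ℝ), NN a t := by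
      apply intervalIntegral.intervalIntegral_pos_of_pos_on (hint c 0) _ hcneg
      intro t ht
      have : dist t 0 < δ := by
        rw [Real.dist_eq, sub_zero]
        rw [abs_lt]
        constructor <;> [linarith [ht.1]; linarith [ht.2]]
      linarith [hδ this]
    have hnn1 : 0 ≤ ∫ t in x..c, NN a t :=
      intervalIntegral.integral_nonneg hcx (fun t _ => NN_nonneg a t)
    have hadd : (∫ t in x..c, NN a t) + (∫ t in c..(0:ℝ), NN a t) = ∫ t in x..(0:ℝ), NN a t :=
      intervalIntegral.integral_add_adjacent_intervals (hint x c) (hint c 0)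
    have hJx : JJ a x = -∫ t in x..(0:ℝ), NN a t := by
      rw [JJ, intervalIntegral.integral_symm]
    rw [hJ0] at hJx
    have : (∫ t in x..(0:ℝ), NN a t) = 0 := by linarith
    linarith [hadd, hpos1, hnn1, this]
  · -- x > 0 : JJ a x > 0
    set c : ℝ := min (δ/2) x with hc
    have hcx : c ≤ x := min_le_right _ _
    have hcpos : 0 < c := lt_min (by linarith) hpos
    have hcd : c ≤ δ/2 := min_le_left _ _
    have hpos1 : 0 < ∫ t in (0:ℝ)..c, NN a t := by
      apply intervalIntegral.intervalIntegral_pos_of_pos_on (hint 0 c) _ hcpos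
      intro t ht
      have : dist t 0 < δ := by
        rw [Real.dist_eq, sub_zero, abs_lt]
        constructor <;> [linarith [ht.1]; linarith [ht.2]]
      linarith [hδ this]
    have hnn1 : 0 ≤ ∫ t in c..x, NN a t :=
      intervalIntegral.integral_nonneg hcx (fun t _ => NN_nonneg a t)
    have hadd : (∫ t in (0:ℝ)..c, NN a t) + (∫ t in c..x, NN a t) = ∫ t in (0:ℝ)..x, NN a t :=
      intervalIntegral.integral_add_adjacent_intervals (hint 0 c) (hint c x)
    have hJx : JJ a x = ∫ t in (0:ℝ)..x, NN a t := rfl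
    rw [hJ0] at hJx
    linarith [hadd, hpos1, hnn1]

lemma JJ_pos (a : ℝ) {x : ℝ} (hx : 0 < x) : 0 < JJ a x := by
  apply intervalIntegral.intervalIntegral_pos_of_pos_on
    ((continuous_NN a).intervalIntegrable 0 x) (fun t _ => NN_pos a t) hx

lemma JJ_neg (a : ℝ) {x : ℝ} (hx : x < 0) : JJ a x < 0 := by
  have h1 : 0 < ∫ t in x..(0:ℝ), NN a t := by
    apply intervalIntegral.intervalIntegral_pos_of_pos_on
      ((continuous_NN a).intervalIntegrable x 0) (fun t _ => NN_pos a t) hx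
  have h2 : JJ a x = -∫ t in x..(0:ℝ), NN a t := by
    rw [JJ, intervalIntegral.integral_symm]
  linarith

noncomputable def TT (a : ℝ) (x : ℝ) : ℝ := ∫ t in (0:ℝ)..x, KK a t / NN a t

lemma continuous_KN (a : ℝ) : Continuous (fun t => KK a t / NN a t) :=
  (continuous_KK a).div (continuous_NN a) (fun t => (NN_pos a t).ne')

lemma hasDerivAt_TT (a : ℝ) (x : ℝ) : HasDerivAt (TT a) (KK a x / NN a x) x :=
  ((continuous_KN a).integral_hasStrictDerivAt 0 x).hasDerivAt

lemma TT_zero (a : ℝ) : TT a 0 = 0 := intervalIntegral.integral_same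

lemma continuous_TT (a : ℝ) : Continuous (TT a) := by
  have h : Differentiable ℝ (TT a) := fun x => (hasDerivAt_TT a x).differentiableAt
  exact h.continuous

lemma w_sq (a : ℝ) (x : ℝ) :
    (w a x * w a x) * Complex.exp (-(2 * Complex.I * (TT a x : ℂ))) = ((NN a x : ℝ) : ℂ) := by
  set Q : ℝ → ℂ := fun t =>
    (w a t * w a t) * Complex.exp (-(2 * Complex.I * (TT a t : ℂ))) * ((NN a t : ℂ))⁻¹ with hQdef
  have hQder : ∀ t, HasDerivAt Q 0 t := by
    intro t
    have hNne : ((NN a t : ℝ) : ℂ) ≠ 0 := by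
      exact_mod_cast (NN_pos a t).ne'
    have hA := (hasDerivAt_w a t).mul (hasDerivAt_w a t)
    have hBin : HasDerivAt (fun s => -(2 * Complex.I * (TT a s : ℂ)))
        (-(2 * Complex.I * ((KK a t / NN a t : ℝ) : ℂ))) t :=
      (((hasDerivAt_TT a t).ofReal_comp).const_mul (2*Complex.I)).neg
    have hB := hBin.cexp
    have hCin : HasDerivAt (fun s => ((NN a s : ℝ) : ℂ))
        (((2 * (w1 a t * (starRingEnd ℂ) (w a t)).re : ℝ)) : ℂ) t :=
      (hasDerivAt_NN a t).ofReal_comp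
    have hC : HasDerivAt (fun s => ((NN a s : ℝ) : ℂ))⁻¹
        (-(((NN a t : ℝ) : ℂ)^2)⁻¹ * ((2 * (w1 a t * (starRingEnd ℂ) (w a t)).re : ℝ) : ℂ)) t := by
      have hinv := hasDerivAt_inv hNne
      exact hinv.comp t hCin
    have htotal : HasDerivAt Q _ t := (hA.mul hB).mul hC
    simp only [Pi.mul_apply] at htotal
    convert htotal using 1
    -- algebraic identity: the derivative is 0
    set W := w a t
    set W1 := w1 a t
    set E := Complex.exp (-(2 * Complex.I * (TT a t : ℂ)))
    have hNz : ((NN a t : ℝ) : ℂ) = W * (starRingEnd ℂ) W := by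
      rw [NN, Complex.mul_conj]
    have hz := Complex.re_add_im (W1 * (starRingEnd ℂ) W)
    have hKz : KK a t = (W1 * (starRingEnd ℂ) W).im := rfl
    have hEne : E ≠ 0 := Complex.exp_ne_zero _
    set z := W1 * (starRingEnd ℂ) W with hzdef
    have hKoverN : ((KK a t / NN a t : ℝ) : ℂ) = (z.im:ℂ) / ((NN a t : ℝ):ℂ) := by
      rw [hKz, Complex.ofReal_div]
    have h2re : ((2 * z.re : ℝ) : ℂ) = 2 * (z.re:ℂ) := by push_cast; ring
    rw [hKoverN, h2re]
    rw [eq_comm]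
    field_simp
    linear_combination (E * (2*W*W1)) * hNz
      - (E * (2*W*W)) * hz + (2*E*W^2*(((NN a t : ℝ):ℂ)^2 - 1)) * hzdef
  have hconst : ∀ t, Q t = Q 0 := fun t =>
    is_const_of_deriv_eq_zero (fun s => (hQder s).differentiableAt)
      (fun s => (hQder s).deriv) t 0
  have hQ0 : Q 0 = 1 := by
    rw [hQdef]
    simp [w_zero, TT_zero, NN_zero]
  have hNne : ((NN a x : ℝ) : ℂ) ≠ 0 := by exact_mod_cast (NN_pos a x).ne'
  have := hconst x
  rw [hQ0, hQdef] at this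
  field_simp at this
  linear_combination this

noncomputable def FF (a : ℝ) (x : ℝ) : ℂ := w a x * Complex.exp (-(Complex.I * (TT a x : ℂ)))

lemma FF_sq (a : ℝ) (x : ℝ) : FF a x * FF a x = ((NN a x : ℝ) : ℂ) := by
  have hexp : Complex.exp (-(Complex.I * (TT a x : ℂ))) * Complex.exp (-(Complex.I * (TT a x : ℂ)))
      = Complex.exp (-(2 * Complex.I * (TT a x : ℂ))) := by
    rw [← Complex.exp_add]
    ring_nf
  calc FF a x * FF a x = (w a x * w a x) *
        (Complex.exp (-(Complex.I * (TT a x : ℂ))) * Complex.exp (-(Complex.I * (TT a x : ℂ)))) := by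
        rw [FF]; ring
    _ = (w a x * w a x) * Complex.exp (-(2 * Complex.I * (TT a x : ℂ))) := by rw [hexp]
    _ = ((NN a x : ℝ) : ℂ) := w_sq a x

lemma FF_im (a : ℝ) (x : ℝ) : (FF a x).im = 0 := by
  have h := FF_sq a x
  have him := congrArg Complex.im h
  have hre := congrArg Complex.re h
  rw [Complex.mul_im, Complex.ofReal_im] at him
  rw [Complex.mul_re, Complex.ofReal_re] at hre
  have hN := NN_pos a x
  by_contra h0
  have hre0 : (FF a x).re = 0 := by
    have h2 : (FF a x).re * (FF a x).im = 0 := by linarith [him]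
    rcases mul_eq_zero.mp h2 with h' | h'
    · exact h'
    · exact absurd h' h0
  rw [hre0] at hre
  nlinarith [hre, hN]

lemma FF_re_sq (a : ℝ) (x : ℝ) : (FF a x).re ^ 2 = NN a x := by
  have hre := congrArg Complex.re (FF_sq a x)
  rw [Complex.mul_re, Complex.ofReal_re, FF_im] at hre
  nlinarith [hre]

lemma FF_re_ne (a : ℝ) (x : ℝ) : (FF a x).re ≠ 0 := by
  intro h
  have := FF_re_sq a x
  rw [h] at this
  have := NN_pos a x
  nlinarith

lemma continuous_FF_re (a : ℝ) : Continuous (fun x => (FF a x).re) := by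
  apply Complex.continuous_re.comp
  apply (continuous_w a).mul
  apply Complex.continuous_exp.comp
  exact ((continuous_const.mul (Complex.continuous_ofReal.comp (continuous_TT a))).neg)

lemma FF_zero (a : ℝ) : FF a 0 = 1 := by
  rw [FF, w_zero, TT_zero]
  simp

lemma FF_re_pos (a : ℝ) (x : ℝ) : 0 < (FF a x).re := by
  by_contra h
  push_neg at h
  have hlt : (FF a x).re < 0 := lt_of_le_of_ne h (FF_re_ne a x)
  have hg0 : (FF a 0).re = 1 := by rw [FF_zero]; simp
  have hmem : (0:ℝ) ∈ uIcc ((fun t => (FF a t).re) x) ((fun t => (FF a t).re) 0) := by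
    rw [Set.mem_uIcc]
    left
    constructor <;> simp [hg0] <;> linarith
  have hsub := intermediate_value_uIcc ((continuous_FF_re a).continuousOn (s := uIcc x 0))
  obtain ⟨t, _, ht⟩ := hsub hmem
  exact FF_re_ne a t ht

lemma w_eq_FF (a : ℝ) (x : ℝ) :
    w a x = (((FF a x).re : ℝ) : ℂ) * Complex.exp (Complex.I * (TT a x : ℂ)) := by
  have h1 : FF a x = (((FF a x).re : ℝ) : ℂ) := by
    rw [← Complex.re_add_im (FF a x), FF_im]
    simp
  have h2 : FF a x * Complex.exp (Complex.I * (TT a x : ℂ)) = w a x := by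
    rw [FF, mul_assoc, ← Complex.exp_add, neg_add_cancel, Complex.exp_zero, mul_one]
  rw [← h2, ← h1]

lemma abs_w (a : ℝ) (x : ℝ) : ‖w a x‖ = (FF a x).re := by
  rw [w_eq_FF, norm_mul]
  rw [Complex.norm_exp]
  have h1 : (Complex.I * (TT a x : ℂ)).re = 0 := by simp
  rw [h1, Real.exp_zero, mul_one, Complex.norm_real, Real.norm_of_nonneg (FF_re_pos a x).le]

lemma oneFone_eq (a x : ℝ) :
    oneFone (Complex.I * a) (Complex.I * x) = w a x := by
  rw [oneFone, w, SS]
  apply tsum_congr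
  intro k
  rw [cc, mul_pow]
  field_simp

end Stmt14Aux

open Stmt14Aux in
theorem stmt14 (a : ℝ)
    -- y is the continuous determination of the argument of ₁F₁(ia;1;ix) with y(0)=0
    (y : ℝ → ℝ) (hy0 : y 0 = 0) (hycont : Continuous y)
    (hyarg : ∀ x : ℝ, oneFone (Complex.I * a) (Complex.I * x) =
      (‖oneFone (Complex.I * a) (Complex.I * x)‖ : ℂ) *
        Complex.exp (Complex.I * (y x : ℂ))) :
    -- 𝔊(x) = x − 2·arg ₁F₁(ia; 1; ix) = x − 2y(x) is strictly increasing on ℝ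
    StrictMono (fun x : ℝ => x - 2 * y x) := by
  -- Step 1: y coincides with the C¹ phase TT
  have hkey : ∀ x : ℝ, ∃ n : ℤ, TT a x - y x = n * (2 * Real.pi) := by
    intro x
    have h1 := hyarg x
    rw [oneFone_eq a x, abs_w a x] at h1
    have h2 := w_eq_FF a x
    have h3 : Complex.exp (Complex.I * (TT a x : ℂ)) = Complex.exp (Complex.I * (y x : ℂ)) := by
      have hne : (((FF a x).re : ℝ) : ℂ) ≠ 0 := by
        exact_mod_cast (FF_re_pos a x).ne'
      exact mul_left_cancel₀ hne (h2.symm.trans h1)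
    rw [Complex.exp_eq_exp_iff_exists_int] at h3
    obtain ⟨n, hn⟩ := h3
    refine ⟨n, ?_⟩
    have him := congrArg Complex.im hn
    simp [Complex.add_im, Complex.mul_im] at him
    linarith [him]
  have hgcont : Continuous (fun x => TT a x - y x) := (continuous_TT a).sub hycont
  have hg0 : TT a 0 - y 0 = 0 := by rw [TT_zero, hy0]; ring
  have hpi := Real.pi_pos
  have hyTT : ∀ x, y x = TT a x := by
    intro x
    by_contra h0
    obtain ⟨n, hn⟩ := hkey x
    have hn0 : n ≠ 0 := by
      intro h
      rw [h] at hn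
      push_cast at hn
      apply h0
      linarith
    -- IVT argument: find t with TT a t - y t = ±π, contradiction
    have hmid : ∀ t : ℝ, TT a t - y t ≠ Real.pi ∧ TT a t - y t ≠ -Real.pi := by
      intro t
      obtain ⟨m, hm⟩ := hkey t
      constructor
      · intro h
        rw [h] at hm
        have h2 : (2*(m:ℝ)) * Real.pi = 1 * Real.pi := by linarith
        have h3 : (2*(m:ℝ)) = 1 := mul_right_cancel₀ Real.pi_ne_zero h2
        have h4 : (2*m : ℤ) = 1 := by exact_mod_cast h3
        omega
      · intro h
        rw [h] at hm
        have h2 : (2*(m:ℝ)) * Real.pi = (-1) * Real.pi := by linarith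
        have h3 : (2*(m:ℝ)) = -1 := mul_right_cancel₀ Real.pi_ne_zero h2
        have h4 : (2*m : ℤ) = -1 := by exact_mod_cast h3
        omega
    set g := fun t => TT a t - y t with hgdef
    rcases lt_or_gt_of_ne hn0 with hneg | hpos
    · -- n < 0 : g x ≤ -2π < -π < 0 = g 0
      have hgx : g x ≤ -(2*Real.pi) := by
        rw [hgdef]
        simp only
        rw [hn]
        have hle : n ≤ -1 := by omega
        have : (n:ℝ) ≤ -1 := by exact_mod_cast hle
        nlinarith
      have hmem : -Real.pi ∈ uIcc (g 0) (g x) := by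
        rw [Set.mem_uIcc]
        right
        constructor
        · linarith
        · rw [hgdef]; simp only; rw [hg0]; linarith
      obtain ⟨t, _, ht⟩ := intermediate_value_uIcc (hgcont.continuousOn (s := uIcc 0 x)) hmem
      exact (hmid t).2 ht
    · have hgx : g x ≥ 2*Real.pi := by
        rw [hgdef]
        simp only
        rw [hn]
        have : (1:ℝ) ≤ (n:ℝ) := by exact_mod_cast hpos
        nlinarith
      have hmem : Real.pi ∈ uIcc (g 0) (g x) := by
        rw [Set.mem_uIcc]
        left
        constructor
        · rw [hgdef]; simp only; rw [hg0]; linarith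
        · linarith
      obtain ⟨t, _, ht⟩ := intermediate_value_uIcc (hgcont.continuousOn (s := uIcc 0 x)) hmem
      exact (hmid t).1 ht
  have hyeq : y = TT a := funext hyTT
  -- Step 2: strict monotonicity via positive derivative
  have hGder : ∀ x : ℝ, HasDerivAt (fun x : ℝ => x - 2 * y x)
      (1 - 2 * (KK a x / NN a x)) x := by
    intro x
    have h1 : HasDerivAt y (KK a x / NN a x) x := by
      rw [hyeq]; exact hasDerivAt_TT a x
    exact (hasDerivAt_id x).sub (h1.const_mul 2)
  apply strictMono_of_deriv_pos
  intro x
  rw [(hGder x).deriv]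
  rcases eq_or_ne x 0 with hx0 | hx0
  · rw [hx0, KK_zero]
    norm_num
  · have hN := NN_pos a x
    have hs := star_identity a x
    have h2 : 1 - 2 * (KK a x / NN a x) = JJ a x / (x * NN a x) := by
      field_simp
      linear_combination (-2) * hs
    rw [h2]
    rcases lt_or_gt_of_ne hx0 with hneg | hpos
    · exact div_pos_of_neg_of_neg (JJ_neg a hneg) (by nlinarith)
    · exact div_pos (JJ_pos a hpos) (by nlinarith)
end
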